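/- arXiv:1509.05842 — 6 statements merged into one kernel-verified Lean document; each statement's English description precedes it below -/
import Mathlib

section
/- Structure preserving bisimilarity ≈sp is an equivalence relation on nets (i.e. on Petri nets with bounded parallelism): it is reflexive, symmetric and transitive. -/
open scoped Classical

/-- A typed Petri net over the action alphabet `Act`.  The flow relation (with arc
weights) is presented through the pre- and post-multisets of each transition. -/
structure PetriNet (Act : Type) : Type 1 where
  Plc : Type
  Tr : Type
  pre : Tr → Multiset Plc
  post : Tr → Multiset Plc
  M0 : Multiset Plc
  typ : Set Act
  lbl : Tr → Act
  lbl_mem : ∀ t, lbl t ∈ typ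

namespace PetriNet

variable {Act : Type}

/-- `M [t⟩ M'`: transition `t` is enabled at the marking `M` and firing it yields `M'`. -/
def fires (N : PetriNet Act) (M : Multiset N.Plc) (t : N.Tr) (M' : Multiset N.Plc) : Prop :=
  N.pre t ≤ M ∧ M' = M - N.pre t + N.post t

/-- The markings reachable from the initial marking (i.e. occurring in some path). -/
inductive Reachable (N : PetriNet Act) : Multiset N.Plc → Prop
  | init : Reachable N N.M0
  | step {M : Multiset N.Plc} {t : N.Tr} {M' : Multiset N.Plc} :
      Reachable N M → N.fires M t M' → Reachable N M'

/-- Bounded parallelism: no reachable marking `M` admits an infinite multiset `U` of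
transitions with `∑_{t ∈ U} •t ≤ M`. -/
def BoundedParallelism (N : PetriNet Act) : Prop :=
  ¬ ∃ (M : Multiset N.Plc) (U : N.Tr → ℕ), N.Reachable M ∧
      (Function.support U).Infinite ∧
      ∀ F : Finset N.Tr, (∑ t ∈ F, U t • N.pre t) ≤ M

/-- A net is safe if every reachable marking is a plain set. -/
def Safe (N : PetriNet Act) : Prop := ∀ M, N.Reachable M → M.Nodup

end PetriNet

/-- A linking between two nets: a multiset of links, i.e. of pairs of places. -/
abbrev Linking {Act : Type} (N₁ N₂ : PetriNet Act) : Type := Multiset (N₁.Plc × N₂.Plc)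

/-- First projection of a linking: the induced marking of the first net. -/
def Linking.proj1 {Act : Type} {N₁ N₂ : PetriNet Act} (l : Linking N₁ N₂) :
    Multiset N₁.Plc := l.map Prod.fst

/-- Second projection of a linking: the induced marking of the second net. -/
def Linking.proj2 {Act : Type} {N₁ N₂ : PetriNet Act} (l : Linking N₁ N₂) :
    Multiset N₂.Plc := l.map Prod.snd

/-- `B` is a structure preserving bisimulation between `N₁` and `N₂`. -/
def IsSPBisim {Act : Type} (N₁ N₂ : PetriNet Act) (B : Set (Linking N₁ N₂)) : Prop :=
  (∀ c l : Linking N₁ N₂, l ∈ B → c ≤ l → ∀ t₁ : N₁.Tr, c.proj1 = N₁.pre t₁ →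
      ∃ t₂ : N₂.Tr, N₂.lbl t₂ = N₁.lbl t₁ ∧ c.proj2 = N₂.pre t₂ ∧
        ∃ cbar : Linking N₁ N₂, cbar.proj1 = N₁.post t₁ ∧ cbar.proj2 = N₂.post t₂ ∧
          l - c + cbar ∈ B) ∧
  (∀ c l : Linking N₁ N₂, l ∈ B → c ≤ l → ∀ t₂ : N₂.Tr, c.proj2 = N₂.pre t₂ →
      ∃ t₁ : N₁.Tr, N₁.lbl t₁ = N₂.lbl t₂ ∧ c.proj1 = N₁.pre t₁ ∧
        ∃ cbar : Linking N₁ N₂, cbar.proj1 = N₁.post t₁ ∧ cbar.proj2 = N₂.post t₂ ∧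
          l - c + cbar ∈ B)

/-- Structure preserving bisimilarity `N₁ ≈sp N₂`. -/
def SPBisimilar {Act : Type} (N₁ N₂ : PetriNet Act) : Prop :=
  N₁.typ = N₂.typ ∧ ∃ B : Set (Linking N₁ N₂), IsSPBisim N₁ N₂ B ∧
    ∃ l ∈ B, l.proj1 = N₁.M0 ∧ l.proj2 = N₂.M0

section Aux

lemma map_sub_of_le {α β : Type*} [DecidableEq α] [DecidableEq β] (f : α → β) {a b : Multiset α} (h : b ≤ a) :
    (a - b).map f = a.map f - b.map f := by
  obtain ⟨c, rfl⟩ := Multiset.le_iff_exists_add.mp h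
  simp

lemma exists_preimage_of_le_map {α β : Type*} {f : α → β} {s : Multiset β} {t : Multiset α}
    (h : s ≤ t.map f) : ∃ u ≤ t, u.map f = s := by
  induction s using Multiset.induction generalizing t with
  | empty => exact ⟨0, by simp, by simp⟩
  | cons b s ih =>
    have hb : b ∈ t.map f := Multiset.mem_of_le h (Multiset.mem_cons_self b s)
    obtain ⟨a, ha, rfl⟩ := Multiset.mem_map.mp hb
    have ht : t = a ::ₘ t.erase a := (Multiset.cons_erase ha).symm
    rw [ht, Multiset.map_cons] at h
    have h' : s ≤ (t.erase a).map f := (Multiset.cons_le_cons_iff (f a)).mp h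
    obtain ⟨u, hu, hum⟩ := ih h'
    exact ⟨a ::ₘ u, ht ▸ Multiset.cons_le_cons a hu, by simp [hum]⟩

lemma glue_linkings {α β γ : Type*} {a : Multiset (α × β)} {b : Multiset (β × γ)}
    (h : a.map Prod.snd = b.map Prod.fst) :
    ∃ m : Multiset (α × β × γ),
      m.map (fun x => (x.1, x.2.1)) = a ∧ m.map Prod.snd = b := by
  induction a using Multiset.induction generalizing b with
  | empty =>
    refine ⟨0, by simp, ?_⟩
    simp only [Multiset.map_zero] at h ⊢
    exact (Multiset.map_eq_zero.mp h.symm).symm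
  | cons p a ih =>
    have hp : p.2 ∈ b.map Prod.fst := by
      rw [← h, Multiset.map_cons]; exact Multiset.mem_cons_self _ _
    obtain ⟨q, hq, hq1⟩ := Multiset.mem_map.mp hp
    have hb : b = q ::ₘ b.erase q := (Multiset.cons_erase hq).symm
    rw [hb, Multiset.map_cons, Multiset.map_cons, hq1] at h
    have h' : a.map Prod.snd = (b.erase q).map Prod.fst :=
      (Multiset.cons_inj_right _).mp h
    obtain ⟨m, hm1, hm2⟩ := ih h'
    refine ⟨(p.1, p.2, q.2) ::ₘ m, by simp [hm1], ?_⟩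
    rw [Multiset.map_cons, hm2]
    show ((p.2, q.2) : β × γ) ::ₘ b.erase q = b
    rw [show ((p.2, q.2) : β × γ) = q from Prod.ext hq1.symm rfl]
    exact Multiset.cons_erase hq

lemma linking_proj1_map {Act : Type} {N₁ N₂ : PetriNet Act} (l : Linking N₁ N₂) :
    l.proj1 = l.map Prod.fst := rfl

lemma linking_proj2_map {Act : Type} {N₁ N₂ : PetriNet Act} (l : Linking N₁ N₂) :
    l.proj2 = l.map Prod.snd := rfl

lemma spBisimilar_refl {Act : Type} (N : PetriNet Act) : SPBisimilar N N := by
  refine ⟨rfl, {l : Linking N N | ∀ p ∈ l, (p : N.Plc × N.Plc).1 = p.2}, ?_, ?_⟩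
  · have key : ∀ (c : Linking N N), (∀ p ∈ c, (p : N.Plc × N.Plc).1 = p.2) →
        c.proj1 = c.proj2 := by
      intro c hc
      exact Multiset.map_congr rfl hc
    constructor
    · intro c l hl hcl t₁ hpre
      refine ⟨t₁, rfl, ?_, (N.post t₁).map (fun s => (s, s)), ?_, ?_, ?_⟩
      · rw [← key c (fun p hp => hl p (Multiset.mem_of_le hcl hp))]; exact hpre
      · simp [Linking.proj1, Multiset.map_map]
      · simp [Linking.proj2, Multiset.map_map]
      · intro p hp
        rcases Multiset.mem_add.mp hp with h | h
        · exact hl p (Multiset.mem_of_le (Multiset.sub_le_self l c) h)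
        · obtain ⟨s, _, rfl⟩ := Multiset.mem_map.mp h; rfl
    · intro c l hl hcl t₂ hpre
      refine ⟨t₂, rfl, ?_, (N.post t₂).map (fun s => (s, s)), ?_, ?_, ?_⟩
      · rw [key c (fun p hp => hl p (Multiset.mem_of_le hcl hp))]; exact hpre
      · simp [Linking.proj1, Multiset.map_map]
      · simp [Linking.proj2, Multiset.map_map]
      · intro p hp
        rcases Multiset.mem_add.mp hp with h | h
        · exact hl p (Multiset.mem_of_le (Multiset.sub_le_self l c) h)
        · obtain ⟨s, _, rfl⟩ := Multiset.mem_map.mp h; rfl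
  · refine ⟨N.M0.map (fun s => (s, s)), ?_, ?_, ?_⟩
    · intro p hp; obtain ⟨s, _, rfl⟩ := Multiset.mem_map.mp hp; rfl
    · simp [Linking.proj1, Multiset.map_map]
    · simp [Linking.proj2, Multiset.map_map]

lemma swap_proj1 {Act : Type} {N₁ N₂ : PetriNet Act} (l : Linking N₂ N₁) :
    (Linking.proj1 (l.map Prod.swap : Linking N₁ N₂)) = l.proj2 := by
  simp [Linking.proj1, Linking.proj2, Multiset.map_map, Function.comp]

lemma swap_proj2 {Act : Type} {N₁ N₂ : PetriNet Act} (l : Linking N₂ N₁) :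
    (Linking.proj2 (l.map Prod.swap : Linking N₁ N₂)) = l.proj1 := by
  simp [Linking.proj1, Linking.proj2, Multiset.map_map, Function.comp]

lemma spBisimilar_symm {Act : Type} {N₁ N₂ : PetriNet Act} (h : SPBisimilar N₁ N₂) :
    SPBisimilar N₂ N₁ := by
  obtain ⟨htyp, B, ⟨hB1, hB2⟩, l₀, hl₀, hl₀1, hl₀2⟩ := h
  refine ⟨htyp.symm, {l : Linking N₂ N₁ | (l.map Prod.swap : Linking N₁ N₂) ∈ B}, ⟨?_, ?_⟩,
    l₀.map Prod.swap, ?_, ?_, ?_⟩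
  · intro c l hl hcl t₂ hpre
    obtain ⟨t₁, hlbl, hpre', cbar, hc1, hc2, hmem⟩ :=
      hB2 (c.map Prod.swap) (l.map Prod.swap) hl (Multiset.map_le_map hcl) t₂
        (by rw [swap_proj2]; exact hpre)
    refine ⟨t₁, hlbl, by rw [← swap_proj1 c]; exact hpre', cbar.map Prod.swap,
      by rw [swap_proj1]; exact hc2, by rw [swap_proj2]; exact hc1, ?_⟩
    show ((l - c + cbar.map Prod.swap).map Prod.swap : Linking N₁ N₂) ∈ B
    have : ((l - c + cbar.map Prod.swap).map Prod.swap : Linking N₁ N₂)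
        = l.map Prod.swap - c.map Prod.swap + cbar := by
      simp only [Multiset.map_add, map_sub_of_le _ hcl, Multiset.map_map]
      simp [Function.comp]
    rw [this]; exact hmem
  · intro c l hl hcl t₁ hpre
    obtain ⟨t₂, hlbl, hpre', cbar, hc1, hc2, hmem⟩ :=
      hB1 (c.map Prod.swap) (l.map Prod.swap) hl (Multiset.map_le_map hcl) t₁
        (by rw [swap_proj1]; exact hpre)
    refine ⟨t₂, hlbl, by rw [← swap_proj2 c]; exact hpre', cbar.map Prod.swap,
      by rw [swap_proj1]; exact hc2, by rw [swap_proj2]; exact hc1, ?_⟩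
    show ((l - c + cbar.map Prod.swap).map Prod.swap : Linking N₁ N₂) ∈ B
    have : ((l - c + cbar.map Prod.swap).map Prod.swap : Linking N₁ N₂)
        = l.map Prod.swap - c.map Prod.swap + cbar := by
      simp only [Multiset.map_add, map_sub_of_le _ hcl, Multiset.map_map]
      simp [Function.comp]
    rw [this]; exact hmem
  · show (l₀.map Prod.swap).map Prod.swap ∈ B
    simpa [Multiset.map_map, Function.comp] using hl₀
  · rw [swap_proj1]; exact hl₀2
  · rw [swap_proj2]; exact hl₀1

end Aux

lemma spBisimilar_trans {Act : Type} {N₁ N₂ N₃ : PetriNet Act}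
    (h12 : SPBisimilar N₁ N₂) (h23 : SPBisimilar N₂ N₃) : SPBisimilar N₁ N₃ := by
  obtain ⟨ht12, B12, ⟨hB12a, hB12b⟩, l12, hl12, hl12a, hl12b⟩ := h12
  obtain ⟨ht23, B23, ⟨hB23a, hB23b⟩, l23, hl23, hl23a, hl23b⟩ := h23
  refine ⟨ht12.trans ht23,
    {l : Linking N₁ N₃ | ∃ m : Multiset (N₁.Plc × N₂.Plc × N₃.Plc),
      (m.map (fun x => (x.1, x.2.1)) : Linking N₁ N₂) ∈ B12 ∧
      (m.map Prod.snd : Linking N₂ N₃) ∈ B23 ∧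
      m.map (fun x => (x.1, x.2.2)) = l}, ⟨?_, ?_⟩, ?_⟩
  · intro c l hl hcl t₁ hpre
    obtain ⟨m, hm12, hm23, rfl⟩ := hl
    obtain ⟨cm, hcm, rfl⟩ := exists_preimage_of_le_map hcl
    have hpre12 : Linking.proj1 (cm.map (fun x => (x.1, x.2.1)) : Linking N₁ N₂)
        = N₁.pre t₁ := by
      rw [← hpre]; simp [Linking.proj1, Multiset.map_map, Function.comp]
    obtain ⟨t₂, hlbl2, hpre2, cbar12, hcbar12a, hcbar12b, hmem12⟩ :=
      hB12a _ _ hm12 (Multiset.map_le_map hcm) t₁ hpre12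
    have hpre23 : Linking.proj1 (cm.map Prod.snd : Linking N₂ N₃) = N₂.pre t₂ := by
      rw [← hpre2]; simp [Linking.proj1, Linking.proj2, Multiset.map_map, Function.comp]
    obtain ⟨t₃, hlbl3, hpre3, cbar23, hcbar23a, hcbar23b, hmem23⟩ :=
      hB23a _ _ hm23 (Multiset.map_le_map hcm) t₂ hpre23
    have hmid : cbar12.map Prod.snd = cbar23.map Prod.fst := by
      rw [← linking_proj2_map, ← linking_proj1_map, hcbar12b, hcbar23a]
    obtain ⟨mbar, hmbar12, hmbar23⟩ := glue_linkings hmid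
    refine ⟨t₃, hlbl3.trans hlbl2, ?_, mbar.map (fun x => (x.1, x.2.2)), ?_, ?_,
      ⟨m - cm + mbar, ?_, ?_, ?_⟩⟩
    · rw [← hpre3]; simp [Linking.proj2, Multiset.map_map, Function.comp]
    · rw [← hcbar12a, ← hmbar12]
      simp [Linking.proj1, Multiset.map_map, Function.comp]
    · rw [← hcbar23b, ← hmbar23]
      simp [Linking.proj2, Multiset.map_map, Function.comp]
    · simp only [Multiset.map_add, map_sub_of_le _ hcm, hmbar12]; exact hmem12
    · simp only [Multiset.map_add, map_sub_of_le _ hcm, hmbar23]; exact hmem23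
    · simp only [Multiset.map_add, map_sub_of_le _ hcm]
  · intro c l hl hcl t₃ hpre
    obtain ⟨m, hm12, hm23, rfl⟩ := hl
    obtain ⟨cm, hcm, rfl⟩ := exists_preimage_of_le_map hcl
    have hpre23 : Linking.proj2 (cm.map Prod.snd : Linking N₂ N₃) = N₃.pre t₃ := by
      rw [← hpre]; simp [Linking.proj2, Multiset.map_map, Function.comp]
    obtain ⟨t₂, hlbl2, hpre2, cbar23, hcbar23a, hcbar23b, hmem23⟩ :=
      hB23b _ _ hm23 (Multiset.map_le_map hcm) t₃ hpre23
    have hpre12 : Linking.proj2 (cm.map (fun x => (x.1, x.2.1)) : Linking N₁ N₂)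
        = N₂.pre t₂ := by
      rw [← hpre2]; simp [Linking.proj1, Linking.proj2, Multiset.map_map, Function.comp]
    obtain ⟨t₁, hlbl1, hpre1, cbar12, hcbar12a, hcbar12b, hmem12⟩ :=
      hB12b _ _ hm12 (Multiset.map_le_map hcm) t₂ hpre12
    have hmid : cbar12.map Prod.snd = cbar23.map Prod.fst := by
      rw [← linking_proj2_map, ← linking_proj1_map, hcbar12b, hcbar23a]
    obtain ⟨mbar, hmbar12, hmbar23⟩ := glue_linkings hmid
    refine ⟨t₁, hlbl1.trans hlbl2, ?_, mbar.map (fun x => (x.1, x.2.2)), ?_, ?_,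
      ⟨m - cm + mbar, ?_, ?_, ?_⟩⟩
    · rw [← hpre1]; simp [Linking.proj1, Multiset.map_map, Function.comp]
    · rw [← hcbar12a, ← hmbar12]
      simp [Linking.proj1, Multiset.map_map, Function.comp]
    · rw [← hcbar23b, ← hmbar23]
      simp [Linking.proj2, Multiset.map_map, Function.comp]
    · simp only [Multiset.map_add, map_sub_of_le _ hcm, hmbar12]; exact hmem12
    · simp only [Multiset.map_add, map_sub_of_le _ hcm, hmbar23]; exact hmem23
    · simp only [Multiset.map_add, map_sub_of_le _ hcm]
  · have hmid : l12.map Prod.snd = l23.map Prod.fst := by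
      rw [← linking_proj2_map, ← linking_proj1_map, hl12b, hl23a]
    obtain ⟨m₀, hm1, hm2⟩ := glue_linkings hmid
    refine ⟨m₀.map (fun x => (x.1, x.2.2)), ⟨m₀, by rw [hm1]; exact hl12,
      by rw [hm2]; exact hl23, rfl⟩, ?_, ?_⟩
    · rw [← hl12a, ← hm1]; simp [Linking.proj1, Multiset.map_map, Function.comp]
    · rw [← hl23b, ← hm2]; simp [Linking.proj2, Multiset.map_map, Function.comp]

/-- Structure preserving bisimilarity is an equivalence relation on nets
(Petri nets with bounded parallelism). -/
theorem spBisimilar_equivalence (Act : Type) :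
    Equivalence (fun N₁ N₂ : {N : PetriNet Act // N.BoundedParallelism} =>
      SPBisimilar N₁.val N₂.val) := by
  exact ⟨fun N => spBisimilar_refl N.val,
    fun h => spBisimilar_symm h,
    fun h h' => spBisimilar_trans h h'⟩
end

section
/- Structure preserving bisimilarity is a congruence for action prefixing: if N₁ ≈sp N₂ and a ∈ Act, then a_𝒩 N₁ ≈sp a_𝒩 N₂. -/
open scoped Classical

/-- Presets of the transitions of `a_𝒩 N`; `none` is the fresh transition `t_a`. -/
def prefixPre {Act : Type} (N : PetriNet Act) : Option N.Tr → Multiset (Option N.Plc)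
  | none => {none}
  | some t => (N.pre t).map some

/-- Postsets of the transitions of `a_𝒩 N`. -/
def prefixPost {Act : Type} (N : PetriNet Act) : Option N.Tr → Multiset (Option N.Plc)
  | none => N.M0.map some
  | some t => (N.post t).map some

/-- Labels of the transitions of `a_𝒩 N`. -/
def prefixLbl {Act : Type} (a : Act) (N : PetriNet Act) : Option N.Tr → Act
  | none => a
  | some t => N.lbl t

/-- The action prefix `a_𝒩 N`: a fresh place `none` (the new initial marking) and a
fresh transition `none` labelled `a` consuming it and producing the old initial marking. -/
def prefixNet {Act : Type} (a : Act) (N : PetriNet Act) : PetriNet Act where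
  Plc := Option N.Plc
  Tr := Option N.Tr
  pre := prefixPre N
  post := prefixPost N
  M0 := {none}
  typ := N.typ ∪ {a}
  lbl := prefixLbl a N
  lbl_mem := by
    intro t
    cases t with
    | none => exact Set.mem_union_right _ rfl
    | some t => exact Set.mem_union_left _ (N.lbl_mem t)



namespace SPPrefixAux

open Multiset

abbrev lift {α β : Type} (m : Multiset (α × β)) : Multiset (Option α × Option β) :=
  m.map (Prod.map some some)

lemma lift_injmap {α β : Type} :
    Function.Injective (Prod.map (some : α → Option α) (some : β → Option β)) :=
  Function.Injective.prodMap (Option.some_injective _) (Option.some_injective _)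

lemma lift_add {α β : Type} (m n : Multiset (α × β)) : lift (m + n) = lift m + lift n := by
  simp [lift]

lemma lift_le {α β : Type} {c m : Multiset (α × β)} (h : c ≤ m) : lift c ≤ lift m :=
  Multiset.map_le_map h

lemma lift_fst {α β : Type} (m : Multiset (α × β)) :
    (lift m).map Prod.fst = (m.map Prod.fst).map some := by
  simp [lift, map_map, Function.comp_def, Prod.map]

lemma lift_snd {α β : Type} (m : Multiset (α × β)) :
    (lift m).map Prod.snd = (m.map Prod.snd).map some := by
  simp [lift, map_map, Function.comp_def, Prod.map]

lemma exists_of_le_map {α β : Type*} {f : α → β} (hf : Function.Injective f)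
    {c : Multiset β} : ∀ {m : Multiset α}, c ≤ m.map f → ∃ c₀, c₀ ≤ m ∧ c = c₀.map f := by
  classical
  induction c using Multiset.induction_on with
  | empty => exact fun _ => ⟨0, Multiset.zero_le _, rfl⟩
  | cons b c ih =>
    intro m h
    have hb : b ∈ m.map f := mem_of_le h (mem_cons_self _ _)
    obtain ⟨x, hx, rfl⟩ := mem_map.1 hb
    have h' : c ≤ (m.erase x).map f := by
      have := erase_le_erase (f x) h
      rwa [erase_cons_head, ← map_erase f hf x m] at this
    obtain ⟨c₀, hle, rfl⟩ := ih h'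
    exact ⟨x ::ₘ c₀, by
      calc x ::ₘ c₀ ≤ x ::ₘ m.erase x := cons_le_cons _ hle
        _ = m := cons_erase hx, by simp⟩

lemma lift_sub {α β : Type} {c m : Multiset (α × β)} (h : c ≤ m) :
    lift (m - c) = lift m - lift c := by
  have : m = (m - c) + c := (tsub_add_cancel_of_le h).symm
  rw [this, lift_add, add_tsub_cancel_right, add_tsub_cancel_right]

end SPPrefixAux

open Multiset SPPrefixAux in
theorem spBisimilar_congr_prefix_aux {Act : Type} (N₁ N₂ : PetriNet Act) (a : Act)
    (h : SPBisimilar N₁ N₂) :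
    SPBisimilar (prefixNet a N₁) (prefixNet a N₂) := by
  obtain ⟨htyp, B, hB, l₀, hl₀B, hl₀1, hl₀2⟩ := h
  refine ⟨by show N₁.typ ∪ {a} = N₂.typ ∪ {a}; rw [htyp], ?_⟩
  set B' : Set (Linking (prefixNet a N₁) (prefixNet a N₂)) :=
    {L | (∃ m, m + l₀ ∈ B ∧ L = (none, none) ::ₘ lift m) ∨
         (∃ m ∈ B, L = lift m)} with hB'def
  have hcard1 : ∀ (c : Linking (prefixNet a N₁) (prefixNet a N₂)) (m : Linking N₁ N₂),
      c ≤ (none, none) ::ₘ lift m →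
      (Multiset.map Prod.fst c = ({none} : Multiset (Option N₁.Plc)) ∨
       Multiset.map Prod.snd c = ({none} : Multiset (Option N₂.Plc))) →
      c = {((none : Option N₁.Plc), (none : Option N₂.Plc))} := by
    intro c m hc hproj
    have hcc : Multiset.card c = 1 := by
      rcases hproj with hp | hp
      · have := congrArg Multiset.card hp
        exact (Multiset.card_map _ _).symm.trans (this.trans (Multiset.card_singleton _))
      · have := congrArg Multiset.card hp
        exact (Multiset.card_map _ _).symm.trans (this.trans (Multiset.card_singleton _))
    obtain ⟨p, rfl⟩ := Multiset.card_eq_one.1 hcc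
    have hpmem : p ∈ (none, none) ::ₘ lift m :=
      Multiset.mem_of_le hc (Multiset.mem_singleton_self p)
    rcases Multiset.mem_cons.1 hpmem with rfl | hpm
    · rfl
    · exfalso
      obtain ⟨q, _, rfl⟩ := Multiset.mem_map.1 hpm
      rcases hproj with hp | hp
      · erw [Multiset.map_singleton] at hp
        have := Multiset.singleton_inj.1 hp
        simp [Prod.map] at this
      · erw [Multiset.map_singleton] at hp
        have := Multiset.singleton_inj.1 hp
        simp [Prod.map] at this
  have hnonn1 : ∀ (c : Linking (prefixNet a N₁) (prefixNet a N₂)) (X : Multiset N₁.Plc),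
      Multiset.map Prod.fst c = X.map some →
      ((none : Option N₁.Plc), (none : Option N₂.Plc)) ∉ c := by
    intro c X hX hmem
    have : (none : Option N₁.Plc) ∈ Multiset.map Prod.fst c :=
      Multiset.mem_map_of_mem _ hmem
    rw [hX] at this
    obtain ⟨x, _, hx⟩ := Multiset.mem_map.1 this
    exact Option.some_ne_none _ hx
  have hnonn2 : ∀ (c : Linking (prefixNet a N₁) (prefixNet a N₂)) (X : Multiset N₂.Plc),
      Multiset.map Prod.snd c = X.map some →
      ((none : Option N₁.Plc), (none : Option N₂.Plc)) ∉ c := by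
    intro c X hX hmem
    have : (none : Option N₂.Plc) ∈ Multiset.map Prod.snd c :=
      Multiset.mem_map_of_mem _ hmem
    rw [hX] at this
    obtain ⟨x, _, hx⟩ := Multiset.mem_map.1 this
    exact Option.some_ne_none _ hx
  have hconssing : ∀ (m : Linking N₁ N₂), ((none, none) ::ₘ lift m
        : Multiset (Option N₁.Plc × Option N₂.Plc)) =
      {((none : Option N₁.Plc), (none : Option N₂.Plc))} + lift m :=
    fun m => (Multiset.singleton_add _ _).symm
  refine ⟨B', ⟨?_, ?_⟩, (none, none) ::ₘ lift 0,
    Or.inl ⟨0, by simpa using hl₀B, rfl⟩, by simp [Linking.proj1, lift]; rfl,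
    by simp [Linking.proj2, lift]; rfl⟩
  · -- forward clause
    rintro c l hl hc t₁ hpre
    rcases hl with ⟨m, hmB, rfl⟩ | ⟨m, hmB, rfl⟩
    · cases t₁ with
      | none =>
        have hc1 : Multiset.map Prod.fst c = ({none} : Multiset (Option N₁.Plc)) := hpre
        have hceq := hcard1 c m hc (Or.inl hc1)
        refine ⟨none, rfl, ?_, lift l₀, ?_, ?_, ?_⟩
        · rw [hceq]; rfl
        · show Multiset.map Prod.fst (lift l₀) = N₁.M0.map some
          exact lift_fst _ ▸ congrArg (Multiset.map some) hl₀1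
        · show Multiset.map Prod.snd (lift l₀) = N₂.M0.map some
          exact lift_snd _ ▸ congrArg (Multiset.map some) hl₀2
        · refine Or.inr ⟨m + l₀, hmB, ?_⟩
          erw [hceq, lift_add, hconssing m, add_tsub_cancel_left]; rfl
      | some t =>
        have hpre' : Multiset.map Prod.fst c = (N₁.pre t).map some := hpre
        have hnm := hnonn1 c _ hpre'
        have hclift : c ≤ lift m := (Multiset.le_cons_of_notMem hnm).1 hc
        obtain ⟨c₀, hc₀m, rfl⟩ := exists_of_le_map lift_injmap hclift
        have hc₀1 : Linking.proj1 c₀ = N₁.pre t := by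
          apply Multiset.map_injective (Option.some_injective N₁.Plc)
          show Multiset.map some (Multiset.map Prod.fst c₀) = Multiset.map some (N₁.pre t)
          rw [← lift_fst]; exact hpre'
        obtain ⟨t₂, hlbl, hpre₂, cbar₀, hcb1, hcb2, hmem⟩ :=
          hB.1 c₀ (m + l₀) hmB (hc₀m.trans (Multiset.le_iff_exists_add.mpr ⟨l₀, rfl⟩)) t hc₀1
        refine ⟨some t₂, hlbl, ?_, lift cbar₀, ?_, ?_, ?_⟩
        · show Multiset.map Prod.snd (lift c₀) = (N₂.pre t₂).map some
          exact lift_snd _ ▸ congrArg (Multiset.map some) hpre₂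
        · show Multiset.map Prod.fst (lift cbar₀) = (N₁.post t).map some
          exact lift_fst _ ▸ congrArg (Multiset.map some) hcb1
        · show Multiset.map Prod.snd (lift cbar₀) = (N₂.post t₂).map some
          exact lift_snd _ ▸ congrArg (Multiset.map some) hcb2
        · refine Or.inl ⟨m - c₀ + cbar₀, ?_, ?_⟩
          · have heq : m + l₀ - c₀ + cbar₀ = m - c₀ + cbar₀ + l₀ := by
              rw [add_comm m l₀, add_tsub_assoc_of_le hc₀m,
                add_comm l₀ (m - c₀), add_right_comm]
            rwa [heq] at hmem
          · have hsplit2 : ((none, none) ::ₘ lift m : Linking (prefixNet a N₁) (prefixNet a N₂))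
                = ((none, none) ::ₘ lift (m - c₀)) + lift c₀ := by
              rw [Multiset.cons_add, ← lift_add, tsub_add_cancel_of_le hc₀m]; rfl
            erw [hsplit2, add_tsub_cancel_right, Multiset.cons_add, ← lift_add]
    · cases t₁ with
      | none =>
        exfalso
        have hc1 : Multiset.map Prod.fst c = ({none} : Multiset (Option N₁.Plc)) := hpre
        have hcc : Multiset.card c = 1 := (Multiset.card_map _ _).symm.trans ((congrArg Multiset.card hc1).trans (Multiset.card_singleton _))
        obtain ⟨p, rfl⟩ := Multiset.card_eq_one.1 hcc
        rw [Multiset.map_singleton] at hc1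
        have hp1 : p.1 = none := Multiset.singleton_inj.1 hc1
        have hpm : p ∈ lift m := Multiset.mem_of_le hc (Multiset.mem_singleton_self p)
        obtain ⟨q, _, rfl⟩ := Multiset.mem_map.1 hpm
        exact Option.some_ne_none _ hp1
      | some t =>
        have hpre' : Multiset.map Prod.fst c = (N₁.pre t).map some := hpre
        obtain ⟨c₀, hc₀m, rfl⟩ := exists_of_le_map lift_injmap hc
        have hc₀1 : Linking.proj1 c₀ = N₁.pre t := by
          apply Multiset.map_injective (Option.some_injective N₁.Plc)
          show Multiset.map some (Multiset.map Prod.fst c₀) = Multiset.map some (N₁.pre t)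
          rw [← lift_fst]; exact hpre'
        obtain ⟨t₂, hlbl, hpre₂, cbar₀, hcb1, hcb2, hmem⟩ := hB.1 c₀ m hmB hc₀m t hc₀1
        refine ⟨some t₂, hlbl, ?_, lift cbar₀, ?_, ?_, ?_⟩
        · show Multiset.map Prod.snd (lift c₀) = (N₂.pre t₂).map some
          exact lift_snd _ ▸ congrArg (Multiset.map some) hpre₂
        · show Multiset.map Prod.fst (lift cbar₀) = (N₁.post t).map some
          exact lift_fst _ ▸ congrArg (Multiset.map some) hcb1
        · show Multiset.map Prod.snd (lift cbar₀) = (N₂.post t₂).map some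
          exact lift_snd _ ▸ congrArg (Multiset.map some) hcb2
        · refine Or.inr ⟨m - c₀ + cbar₀, hmem, ?_⟩
          have hsplit : (lift m : Linking (prefixNet a N₁) (prefixNet a N₂))
              = lift (m - c₀) + lift c₀ := by
            rw [← lift_add, tsub_add_cancel_of_le hc₀m]
          erw [hsplit, add_tsub_cancel_right, ← lift_add]
  · -- backward clause
    rintro c l hl hc t₂ hpre
    rcases hl with ⟨m, hmB, rfl⟩ | ⟨m, hmB, rfl⟩
    · cases t₂ with
      | none =>
        have hc2 : Multiset.map Prod.snd c = ({none} : Multiset (Option N₂.Plc)) := hpre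
        have hceq := hcard1 c m hc (Or.inr hc2)
        refine ⟨none, rfl, ?_, lift l₀, ?_, ?_, ?_⟩
        · rw [hceq]; rfl
        · show Multiset.map Prod.fst (lift l₀) = N₁.M0.map some
          exact lift_fst _ ▸ congrArg (Multiset.map some) hl₀1
        · show Multiset.map Prod.snd (lift l₀) = N₂.M0.map some
          exact lift_snd _ ▸ congrArg (Multiset.map some) hl₀2
        · refine Or.inr ⟨m + l₀, hmB, ?_⟩
          erw [hceq, lift_add, hconssing m, add_tsub_cancel_left]; rfl
      | some t =>
        have hpre' : Multiset.map Prod.snd c = (N₂.pre t).map some := hpre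
        have hnm := hnonn2 c _ hpre'
        have hclift : c ≤ lift m := (Multiset.le_cons_of_notMem hnm).1 hc
        obtain ⟨c₀, hc₀m, rfl⟩ := exists_of_le_map lift_injmap hclift
        have hc₀2 : Linking.proj2 c₀ = N₂.pre t := by
          apply Multiset.map_injective (Option.some_injective N₂.Plc)
          show Multiset.map some (Multiset.map Prod.snd c₀) = Multiset.map some (N₂.pre t)
          rw [← lift_snd]; exact hpre'
        obtain ⟨t₁', hlbl, hpre₁, cbar₀, hcb1, hcb2, hmem⟩ :=
          hB.2 c₀ (m + l₀) hmB (hc₀m.trans (Multiset.le_iff_exists_add.mpr ⟨l₀, rfl⟩)) t hc₀2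
        refine ⟨some t₁', hlbl, ?_, lift cbar₀, ?_, ?_, ?_⟩
        · show Multiset.map Prod.fst (lift c₀) = (N₁.pre t₁').map some
          exact lift_fst _ ▸ congrArg (Multiset.map some) hpre₁
        · show Multiset.map Prod.fst (lift cbar₀) = (N₁.post t₁').map some
          exact lift_fst _ ▸ congrArg (Multiset.map some) hcb1
        · show Multiset.map Prod.snd (lift cbar₀) = (N₂.post t).map some
          exact lift_snd _ ▸ congrArg (Multiset.map some) hcb2
        · refine Or.inl ⟨m - c₀ + cbar₀, ?_, ?_⟩
          · have heq : m + l₀ - c₀ + cbar₀ = m - c₀ + cbar₀ + l₀ := by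
              rw [add_comm m l₀, add_tsub_assoc_of_le hc₀m,
                add_comm l₀ (m - c₀), add_right_comm]
            rwa [heq] at hmem
          · have hsplit2 : ((none, none) ::ₘ lift m : Linking (prefixNet a N₁) (prefixNet a N₂))
                = ((none, none) ::ₘ lift (m - c₀)) + lift c₀ := by
              rw [Multiset.cons_add, ← lift_add, tsub_add_cancel_of_le hc₀m]; rfl
            erw [hsplit2, add_tsub_cancel_right, Multiset.cons_add, ← lift_add]
    · cases t₂ with
      | none =>
        exfalso
        have hc2 : Multiset.map Prod.snd c = ({none} : Multiset (Option N₂.Plc)) := hpre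
        have hcc : Multiset.card c = 1 := (Multiset.card_map _ _).symm.trans ((congrArg Multiset.card hc2).trans (Multiset.card_singleton _))
        obtain ⟨p, rfl⟩ := Multiset.card_eq_one.1 hcc
        rw [Multiset.map_singleton] at hc2
        have hp2 : p.2 = none := Multiset.singleton_inj.1 hc2
        have hpm : p ∈ lift m := Multiset.mem_of_le hc (Multiset.mem_singleton_self p)
        obtain ⟨q, _, rfl⟩ := Multiset.mem_map.1 hpm
        exact Option.some_ne_none _ hp2
      | some t =>
        have hpre' : Multiset.map Prod.snd c = (N₂.pre t).map some := hpre
        obtain ⟨c₀, hc₀m, rfl⟩ := exists_of_le_map lift_injmap hc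
        have hc₀2 : Linking.proj2 c₀ = N₂.pre t := by
          apply Multiset.map_injective (Option.some_injective N₂.Plc)
          show Multiset.map some (Multiset.map Prod.snd c₀) = Multiset.map some (N₂.pre t)
          rw [← lift_snd]; exact hpre'
        obtain ⟨t₁', hlbl, hpre₁, cbar₀, hcb1, hcb2, hmem⟩ := hB.2 c₀ m hmB hc₀m t hc₀2
        refine ⟨some t₁', hlbl, ?_, lift cbar₀, ?_, ?_, ?_⟩
        · show Multiset.map Prod.fst (lift c₀) = (N₁.pre t₁').map some
          exact lift_fst _ ▸ congrArg (Multiset.map some) hpre₁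
        · show Multiset.map Prod.fst (lift cbar₀) = (N₁.post t₁').map some
          exact lift_fst _ ▸ congrArg (Multiset.map some) hcb1
        · show Multiset.map Prod.snd (lift cbar₀) = (N₂.post t).map some
          exact lift_snd _ ▸ congrArg (Multiset.map some) hcb2
        · refine Or.inr ⟨m - c₀ + cbar₀, hmem, ?_⟩
          have hsplit : (lift m : Linking (prefixNet a N₁) (prefixNet a N₂))
              = lift (m - c₀) + lift c₀ := by
            rw [← lift_add, tsub_add_cancel_of_le hc₀m]
          erw [hsplit, add_tsub_cancel_right, ← lift_add]

/-- Structure preserving bisimilarity is a congruence for action prefixing. -/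
theorem spBisimilar_congr_prefix {Act : Type} (N₁ N₂ : PetriNet Act)
    (h₁ : N₁.BoundedParallelism) (h₂ : N₂.BoundedParallelism) (a : Act)
    (h : SPBisimilar N₁ N₂) :
    SPBisimilar (prefixNet a N₁) (prefixNet a N₂) :=
  spBisimilar_congr_prefix_aux N₁ N₂ a h
end

section
/- Structure preserving bisimilarity is a congruence for relational renaming: if N₁ ≈sp N₂ and R ⊆ Act × Act, then R_𝒩(N₁) ≈sp R_𝒩(N₂). -/
open scoped Classical

/-- The relational renaming `R_𝒩(N)`: same places and initial marking; a transition
`t_b` for each transition `t` of `N` and `b` with `(ℓ(t), b) ∈ R`. -/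
def renameNet {Act : Type} (R : Set (Act × Act)) (N : PetriNet Act) : PetriNet Act where
  Plc := N.Plc
  Tr := {p : N.Tr × Act // (N.lbl p.1, p.2) ∈ R}
  pre := fun t => N.pre t.val.1
  post := fun t => N.post t.val.1
  M0 := N.M0
  typ := {b : Act | ∃ a ∈ N.typ, (a, b) ∈ R}
  lbl := fun t => t.val.2
  lbl_mem := fun t => ⟨N.lbl t.val.1, N.lbl_mem t.val.1, t.property⟩

/-- Structure preserving bisimilarity is a congruence for relational renaming. -/
theorem spBisimilar_congr_rename {Act : Type} (N₁ N₂ : PetriNet Act)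
    (h₁ : N₁.BoundedParallelism) (h₂ : N₂.BoundedParallelism) (R : Set (Act × Act))
    (h : SPBisimilar N₁ N₂) :
    SPBisimilar (renameNet R N₁) (renameNet R N₂) := by
  obtain ⟨htyp, B, ⟨hB1, hB2⟩, l, hl, hp1, hp2⟩ := h
  refine ⟨by simp only [renameNet, htyp], B, ⟨?_, ?_⟩, l, hl, hp1, hp2⟩
  · rintro c l' hl' hc ⟨⟨t₁, b⟩, hb⟩ hpre
    obtain ⟨t₂, hlbl, hpre2, cbar, hc1, hc2, hmem⟩ := hB1 c l' hl' hc t₁ hpre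
    exact ⟨⟨⟨t₂, b⟩, hlbl ▸ hb⟩, rfl, hpre2, cbar, hc1, hc2, hmem⟩
  · rintro c l' hl' hc ⟨⟨t₂, b⟩, hb⟩ hpre
    obtain ⟨t₁, hlbl, hpre1, cbar, hc1, hc2, hmem⟩ := hB2 c l' hl' hc t₂ hpre
    exact ⟨⟨⟨t₁, b⟩, hlbl ▸ hb⟩, rfl, hpre1, cbar, hc1, hc2, hmem⟩
end

section
/- Structure preserving bisimilarity is a congruence for the CCSP parallel composition of nets: if N₁ˡ ≈sp N₂ˡ and N₁ʳ ≈sp N₂ʳ, then N₁ˡ ∥_𝒩 N₁ʳ ≈sp N₂ˡ ∥_𝒩 N₂ʳ. -/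
open scoped Classical

/-- The candidate transitions of `N₁ ∥_𝒩 N₂` that survive: unsynchronised transitions
of either component with label outside `A₁ ∩ A₂`, and synchronising pairs. -/
def parTrProp {Act : Type} (N₁ N₂ : PetriNet Act) :
    N₁.Tr ⊕ N₂.Tr ⊕ N₁.Tr × N₂.Tr → Prop
  | Sum.inl t₁ => N₁.lbl t₁ ∉ N₁.typ ∩ N₂.typ
  | Sum.inr (Sum.inl t₂) => N₂.lbl t₂ ∉ N₁.typ ∩ N₂.typ
  | Sum.inr (Sum.inr p) => N₁.lbl p.1 = N₂.lbl p.2 ∧ N₁.lbl p.1 ∈ N₁.typ ∩ N₂.typ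

/-- Presets in the parallel composition. -/
def parPre {Act : Type} (N₁ N₂ : PetriNet Act) :
    N₁.Tr ⊕ N₂.Tr ⊕ N₁.Tr × N₂.Tr → Multiset (N₁.Plc ⊕ N₂.Plc)
  | Sum.inl t₁ => (N₁.pre t₁).map Sum.inl
  | Sum.inr (Sum.inl t₂) => (N₂.pre t₂).map Sum.inr
  | Sum.inr (Sum.inr p) => (N₁.pre p.1).map Sum.inl + (N₂.pre p.2).map Sum.inr

/-- Postsets in the parallel composition. -/
def parPost {Act : Type} (N₁ N₂ : PetriNet Act) :
    N₁.Tr ⊕ N₂.Tr ⊕ N₁.Tr × N₂.Tr → Multiset (N₁.Plc ⊕ N₂.Plc)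
  | Sum.inl t₁ => (N₁.post t₁).map Sum.inl
  | Sum.inr (Sum.inl t₂) => (N₂.post t₂).map Sum.inr
  | Sum.inr (Sum.inr p) => (N₁.post p.1).map Sum.inl + (N₂.post p.2).map Sum.inr

/-- Labels in the parallel composition. -/
def parLbl {Act : Type} (N₁ N₂ : PetriNet Act) :
    N₁.Tr ⊕ N₂.Tr ⊕ N₁.Tr × N₂.Tr → Act
  | Sum.inl t₁ => N₁.lbl t₁
  | Sum.inr (Sum.inl t₂) => N₂.lbl t₂
  | Sum.inr (Sum.inr p) => N₁.lbl p.1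

/-- The CCSP parallel composition `N₁ ∥_𝒩 N₂` of two nets. -/
def parNet {Act : Type} (N₁ N₂ : PetriNet Act) : PetriNet Act where
  Plc := N₁.Plc ⊕ N₂.Plc
  Tr := {x : N₁.Tr ⊕ N₂.Tr ⊕ N₁.Tr × N₂.Tr // parTrProp N₁ N₂ x}
  pre := fun t => parPre N₁ N₂ t.val
  post := fun t => parPost N₁ N₂ t.val
  M0 := N₁.M0.map Sum.inl + N₂.M0.map Sum.inr
  typ := N₁.typ ∪ N₂.typ
  lbl := fun t => parLbl N₁ N₂ t.val
  lbl_mem := by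
    rintro ⟨x, hx⟩
    rcases x with t₁ | t₂ | p
    · exact Set.mem_union_left _ (N₁.lbl_mem t₁)
    · exact Set.mem_union_right _ (N₂.lbl_mem t₂)
    · exact Set.mem_union_left _ (N₁.lbl_mem p.1)


namespace SPAux

lemma split_le {α : Type*} [DecidableEq α] {c a b : Multiset α} (h : c ≤ a + b) :
    ∃ ca cb, ca ≤ a ∧ cb ≤ b ∧ c = ca + cb := by
  refine ⟨c ∩ a, c - c ∩ a, Multiset.inter_le_right .., ?_, ?_⟩
  · rw [Multiset.le_iff_count] at h ⊢
    intro x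
    have := h x
    simp only [Multiset.count_sub, Multiset.count_inter, Multiset.count_add] at *
    omega
  · rw [add_tsub_cancel_of_le (Multiset.inter_le_left ..)]

lemma exists_preimage {α β : Type*} {f : α → β} (hf : Function.Injective f)
    {c : Multiset β} {s : Multiset α} (h : c ≤ s.map f) :
    ∃ c0, c0 ≤ s ∧ c = c0.map f := by
  induction c using Multiset.induction generalizing s with
  | empty => exact ⟨0, zero_le, rfl⟩
  | cons a c ih =>
    have ha : a ∈ s.map f := Multiset.mem_of_le h (Multiset.mem_cons_self a c)
    obtain ⟨x, hx, rfl⟩ := Multiset.mem_map.mp ha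
    have h2 : c ≤ (s.erase x).map f := by
      have := Multiset.erase_le_erase (f x) h
      rwa [Multiset.erase_cons_head, ← Multiset.map_erase f hf] at this
    obtain ⟨c0, hc0, rfl⟩ := ih h2
    refine ⟨x ::ₘ c0, ?_, by simp⟩
    calc x ::ₘ c0 ≤ x ::ₘ s.erase x := Multiset.cons_le_cons x hc0
    _ = s := Multiset.cons_erase hx

lemma inl_inr_cancel {α β : Type*} {X X' : Multiset α} {Y Y' : Multiset β}
    (h : X.map Sum.inl + Y.map Sum.inr = X'.map Sum.inl + Y'.map Sum.inr) :
    X = X' ∧ Y = Y' := by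
  constructor <;> ext x
  · have := congrArg (Multiset.count (Sum.inl x : α ⊕ β)) h
    simpa [Multiset.count_map_eq_count' _ _ Sum.inl_injective,
      Multiset.count_eq_zero_of_notMem] using this
  · have := congrArg (Multiset.count (Sum.inr x : α ⊕ β)) h
    simpa [Multiset.count_map_eq_count' _ _ Sum.inr_injective,
      Multiset.count_eq_zero_of_notMem] using this

lemma add_sub_add {α : Type*} [DecidableEq α] {a b c d : Multiset α} (h1 : c ≤ a) (h2 : d ≤ b) :
    a + b - (c + d) = (a - c) + (b - d) := by
  ext x
  rw [Multiset.le_iff_count] at h1 h2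
  have := h1 x; have := h2 x
  simp only [Multiset.count_sub, Multiset.count_add]
  omega

variable {Act : Type} {N₁l N₁r N₂l N₂r : PetriNet Act}

/-- Embedding of a pair of linkings into a linking of the parallel compositions. -/
def embedL (ll : Linking N₁l N₂l) (lr : Linking N₁r N₂r) :
    Linking (parNet N₁l N₁r) (parNet N₂l N₂r) :=
  ll.map (Prod.map Sum.inl Sum.inl) + lr.map (Prod.map Sum.inr Sum.inr)

lemma embedL_proj1 (ll : Linking N₁l N₂l) (lr : Linking N₁r N₂r) :
    (embedL ll lr).proj1 = ll.proj1.map Sum.inl + lr.proj1.map Sum.inr := by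
  simp only [embedL, Linking.proj1, Multiset.map_add, Multiset.map_map]
  erw [Multiset.map_add, Multiset.map_map, Multiset.map_map]; rfl

lemma embedL_proj2 (ll : Linking N₁l N₂l) (lr : Linking N₁r N₂r) :
    (embedL ll lr).proj2 = ll.proj2.map Sum.inl + lr.proj2.map Sum.inr := by
  simp only [embedL, Linking.proj2, Multiset.map_add, Multiset.map_map]
  erw [Multiset.map_add, Multiset.map_map, Multiset.map_map]; rfl

lemma embedL_add (a c : Linking N₁l N₂l) (b d : Linking N₁r N₂r) :
    embedL a b + embedL c d = embedL (a + c) (b + d) := by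
  simp only [embedL, Multiset.map_add]
  abel

lemma embedL_sub {a c : Linking N₁l N₂l} {b d : Linking N₁r N₂r}
    (h1 : c ≤ a) (h2 : d ≤ b) :
    embedL a b - embedL c d = embedL (a - c) (b - d) := by
  have hle : embedL c d ≤ embedL a b :=
    add_le_add (α := Multiset _) (Multiset.map_le_map h1) (Multiset.map_le_map h2)
  rw [tsub_eq_iff_eq_add_of_le hle, embedL_add, tsub_add_cancel_of_le h1,
    tsub_add_cancel_of_le h2]

lemma decomp {c : Linking (parNet N₁l N₁r) (parNet N₂l N₂r)}
    {ll : Linking N₁l N₂l} {lr : Linking N₁r N₂r} (h : c ≤ embedL ll lr) :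
    ∃ cl cr, cl ≤ ll ∧ cr ≤ lr ∧ c = embedL cl cr := by
  obtain ⟨ca, cb, hca, hcb, rfl⟩ := split_le h
  obtain ⟨cl, hcl, rfl⟩ := exists_preimage (Sum.inl_injective.prodMap Sum.inl_injective) hca
  obtain ⟨cr, hcr, rfl⟩ := exists_preimage (Sum.inr_injective.prodMap Sum.inr_injective) hcb
  exact ⟨cl, cr, hcl, hcr, rfl⟩

end SPAux
/-- Structure preserving bisimilarity is a congruence for the CCSP parallel composition
of nets. -/
theorem spBisimilar_congr_par {Act : Type} (N₁l N₁r N₂l N₂r : PetriNet Act)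
    (h₁l : N₁l.BoundedParallelism) (h₁r : N₁r.BoundedParallelism)
    (h₂l : N₂l.BoundedParallelism) (h₂r : N₂r.BoundedParallelism)
    (hl : SPBisimilar N₁l N₂l) (hr : SPBisimilar N₁r N₂r) :
    SPBisimilar (parNet N₁l N₁r) (parNet N₂l N₂r) := by
  classical
  obtain ⟨htl, Bl, hBl, l0l, hl0l, hp1l, hp2l⟩ := hl
  obtain ⟨htr, Br, hBr, l0r, hl0r, hp1r, hp2r⟩ := hr
  refine ⟨?_, {x | ∃ ll ∈ Bl, ∃ lr ∈ Br, x = SPAux.embedL ll lr}, ⟨?_, ?_⟩,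
    SPAux.embedL l0l l0r, ⟨l0l, hl0l, l0r, hl0r, rfl⟩, ?_, ?_⟩
  · show N₁l.typ ∪ N₁r.typ = N₂l.typ ∪ N₂r.typ
    rw [htl, htr]
  · -- forward simulation clause
    rintro c l ⟨ll, hll, lr, hlr, rfl⟩ hcle t₁ hpre
    obtain ⟨cl, cr, hcl, hcr, rfl⟩ := SPAux.decomp hcle
    obtain ⟨x, hx⟩ := t₁
    have hpre' := (SPAux.embedL_proj1 cl cr).symm.trans hpre
    rcases x with s₁ | s₂ | ⟨s₁, s₂⟩
    · -- unsynchronised left transition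
      have hpre'' : cl.proj1.map Sum.inl + cr.proj1.map Sum.inr
          = (N₁l.pre s₁).map Sum.inl + (0 : Multiset N₁r.Plc).map Sum.inr := by
        simp only [Multiset.map_zero, add_zero]; exact hpre'
      obtain ⟨h1, h2⟩ := SPAux.inl_inr_cancel hpre''
      have hcr0 : cr = 0 := Multiset.map_eq_zero.mp h2
      subst hcr0
      obtain ⟨t₂, hlbl, hpre2, cbarl, hb1, hb2, hmem⟩ := hBl.1 cl ll hll hcl s₁ h1
      refine ⟨⟨Sum.inl t₂, ?_⟩, ?_, ?_, SPAux.embedL cbarl 0, ?_, ?_, ?_⟩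
      · show N₂l.lbl t₂ ∉ N₂l.typ ∩ N₂r.typ
        rw [hlbl, ← htl, ← htr]; exact hx
      · exact hlbl
      · show (SPAux.embedL cl 0).proj2 = (N₂l.pre t₂).map Sum.inl
        rw [SPAux.embedL_proj2, hpre2]; simp [Linking.proj2]; exact add_zero _
      · show (SPAux.embedL cbarl 0).proj1 = (N₁l.post s₁).map Sum.inl
        rw [SPAux.embedL_proj1, hb1]; simp [Linking.proj1]; exact add_zero _
      · show (SPAux.embedL cbarl 0).proj2 = (N₂l.post t₂).map Sum.inl
        rw [SPAux.embedL_proj2, hb2]; simp [Linking.proj2]; exact add_zero _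
      · refine ⟨ll - cl + cbarl, hmem, lr, hlr, ?_⟩
        rw [SPAux.embedL_sub hcl zero_le, SPAux.embedL_add]
        simp
    · -- unsynchronised right transition
      have hpre'' : cl.proj1.map Sum.inl + cr.proj1.map Sum.inr
          = (0 : Multiset N₁l.Plc).map Sum.inl + (N₁r.pre s₂).map Sum.inr := by
        simp only [Multiset.map_zero, zero_add]; exact hpre'
      obtain ⟨h1, h2⟩ := SPAux.inl_inr_cancel hpre''
      have hcl0 : cl = 0 := Multiset.map_eq_zero.mp h1
      subst hcl0
      obtain ⟨t₂, hlbl, hpre2, cbarr, hb1, hb2, hmem⟩ := hBr.1 cr lr hlr hcr s₂ h2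
      refine ⟨⟨Sum.inr (Sum.inl t₂), ?_⟩, ?_, ?_, SPAux.embedL 0 cbarr, ?_, ?_, ?_⟩
      · show N₂r.lbl t₂ ∉ N₂l.typ ∩ N₂r.typ
        rw [hlbl, ← htl, ← htr]; exact hx
      · exact hlbl
      · show (SPAux.embedL 0 cr).proj2 = (N₂r.pre t₂).map Sum.inr
        rw [SPAux.embedL_proj2, hpre2]; simp [Linking.proj2]; exact zero_add _
      · show (SPAux.embedL 0 cbarr).proj1 = (N₁r.post s₂).map Sum.inr
        rw [SPAux.embedL_proj1, hb1]; simp [Linking.proj1]; exact zero_add _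
      · show (SPAux.embedL 0 cbarr).proj2 = (N₂r.post t₂).map Sum.inr
        rw [SPAux.embedL_proj2, hb2]; simp [Linking.proj2]; exact zero_add _
      · refine ⟨ll, hll, lr - cr + cbarr, hmem, ?_⟩
        rw [SPAux.embedL_sub zero_le hcr, SPAux.embedL_add]
        simp
    · -- synchronising pair
      have hpre'' : cl.proj1.map Sum.inl + cr.proj1.map Sum.inr
          = (N₁l.pre s₁).map Sum.inl + (N₁r.pre s₂).map Sum.inr := hpre'
      obtain ⟨h1, h2⟩ := SPAux.inl_inr_cancel hpre''
      obtain ⟨t₂l, hlbll, hpre2l, cbarl, hbl1, hbl2, hmeml⟩ := hBl.1 cl ll hll hcl s₁ h1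
      obtain ⟨t₂r, hlblr, hpre2r, cbarr, hbr1, hbr2, hmemr⟩ := hBr.1 cr lr hlr hcr s₂ h2
      obtain ⟨hsync, hmemtyp⟩ := hx
      refine ⟨⟨Sum.inr (Sum.inr (t₂l, t₂r)), ?_⟩, ?_, ?_, SPAux.embedL cbarl cbarr, ?_, ?_, ?_⟩
      · refine ⟨?_, ?_⟩
        · show N₂l.lbl t₂l = N₂r.lbl t₂r
          rw [hlbll, hlblr, hsync]
        · show N₂l.lbl t₂l ∈ N₂l.typ ∩ N₂r.typ
          rw [hlbll, ← htl, ← htr]; exact hmemtyp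
      · exact hlbll
      · show (SPAux.embedL cl cr).proj2 = (N₂l.pre t₂l).map Sum.inl + (N₂r.pre t₂r).map Sum.inr
        rw [SPAux.embedL_proj2, hpre2l, hpre2r]
      · show (SPAux.embedL cbarl cbarr).proj1
            = (N₁l.post s₁).map Sum.inl + (N₁r.post s₂).map Sum.inr
        rw [SPAux.embedL_proj1, hbl1, hbr1]
      · show (SPAux.embedL cbarl cbarr).proj2
            = (N₂l.post t₂l).map Sum.inl + (N₂r.post t₂r).map Sum.inr
        rw [SPAux.embedL_proj2, hbl2, hbr2]
      · exact ⟨ll - cl + cbarl, hmeml, lr - cr + cbarr, hmemr, by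
          rw [SPAux.embedL_sub hcl hcr, SPAux.embedL_add]⟩
  · -- backward simulation clause
    rintro c l ⟨ll, hll, lr, hlr, rfl⟩ hcle t₂ hpre
    obtain ⟨cl, cr, hcl, hcr, rfl⟩ := SPAux.decomp hcle
    obtain ⟨x, hx⟩ := t₂
    have hpre' := (SPAux.embedL_proj2 cl cr).symm.trans hpre
    rcases x with s₁ | s₂ | ⟨s₁, s₂⟩
    · -- unsynchronised left transition
      have hpre'' : cl.proj2.map Sum.inl + cr.proj2.map Sum.inr
          = (N₂l.pre s₁).map Sum.inl + (0 : Multiset N₂r.Plc).map Sum.inr := by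
        simp only [Multiset.map_zero, add_zero]; exact hpre'
      obtain ⟨h1, h2⟩ := SPAux.inl_inr_cancel hpre''
      have hcr0 : cr = 0 := Multiset.map_eq_zero.mp h2
      subst hcr0
      obtain ⟨t₁, hlbl, hpre1, cbarl, hb1, hb2, hmem⟩ := hBl.2 cl ll hll hcl s₁ h1
      refine ⟨⟨Sum.inl t₁, ?_⟩, ?_, ?_, SPAux.embedL cbarl 0, ?_, ?_, ?_⟩
      · show N₁l.lbl t₁ ∉ N₁l.typ ∩ N₁r.typ
        rw [hlbl, htl, htr]; exact hx
      · exact hlbl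
      · show (SPAux.embedL cl 0).proj1 = (N₁l.pre t₁).map Sum.inl
        rw [SPAux.embedL_proj1, hpre1]; simp [Linking.proj1]; exact add_zero _
      · show (SPAux.embedL cbarl 0).proj1 = (N₁l.post t₁).map Sum.inl
        rw [SPAux.embedL_proj1, hb1]; simp [Linking.proj1]; exact add_zero _
      · show (SPAux.embedL cbarl 0).proj2 = (N₂l.post s₁).map Sum.inl
        rw [SPAux.embedL_proj2, hb2]; simp [Linking.proj2]; exact add_zero _
      · refine ⟨ll - cl + cbarl, hmem, lr, hlr, ?_⟩
        rw [SPAux.embedL_sub hcl zero_le, SPAux.embedL_add]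
        simp
    · -- unsynchronised right transition
      have hpre'' : cl.proj2.map Sum.inl + cr.proj2.map Sum.inr
          = (0 : Multiset N₂l.Plc).map Sum.inl + (N₂r.pre s₂).map Sum.inr := by
        simp only [Multiset.map_zero, zero_add]; exact hpre'
      obtain ⟨h1, h2⟩ := SPAux.inl_inr_cancel hpre''
      have hcl0 : cl = 0 := Multiset.map_eq_zero.mp h1
      subst hcl0
      obtain ⟨t₁, hlbl, hpre1, cbarr, hb1, hb2, hmem⟩ := hBr.2 cr lr hlr hcr s₂ h2
      refine ⟨⟨Sum.inr (Sum.inl t₁), ?_⟩, ?_, ?_, SPAux.embedL 0 cbarr, ?_, ?_, ?_⟩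
      · show N₁r.lbl t₁ ∉ N₁l.typ ∩ N₁r.typ
        rw [hlbl, htl, htr]; exact hx
      · exact hlbl
      · show (SPAux.embedL 0 cr).proj1 = (N₁r.pre t₁).map Sum.inr
        rw [SPAux.embedL_proj1, hpre1]; simp [Linking.proj1]; exact zero_add _
      · show (SPAux.embedL 0 cbarr).proj1 = (N₁r.post t₁).map Sum.inr
        rw [SPAux.embedL_proj1, hb1]; simp [Linking.proj1]; exact zero_add _
      · show (SPAux.embedL 0 cbarr).proj2 = (N₂r.post s₂).map Sum.inr
        rw [SPAux.embedL_proj2, hb2]; simp [Linking.proj2]; exact zero_add _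
      · refine ⟨ll, hll, lr - cr + cbarr, hmem, ?_⟩
        rw [SPAux.embedL_sub zero_le hcr, SPAux.embedL_add]
        simp
    · -- synchronising pair
      have hpre'' : cl.proj2.map Sum.inl + cr.proj2.map Sum.inr
          = (N₂l.pre s₁).map Sum.inl + (N₂r.pre s₂).map Sum.inr := hpre'
      obtain ⟨h1, h2⟩ := SPAux.inl_inr_cancel hpre''
      obtain ⟨t₁l, hlbll, hpre1l, cbarl, hbl1, hbl2, hmeml⟩ := hBl.2 cl ll hll hcl s₁ h1
      obtain ⟨t₁r, hlblr, hpre1r, cbarr, hbr1, hbr2, hmemr⟩ := hBr.2 cr lr hlr hcr s₂ h2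
      obtain ⟨hsync, hmemtyp⟩ := hx
      refine ⟨⟨Sum.inr (Sum.inr (t₁l, t₁r)), ?_⟩, ?_, ?_, SPAux.embedL cbarl cbarr, ?_, ?_, ?_⟩
      · refine ⟨?_, ?_⟩
        · show N₁l.lbl t₁l = N₁r.lbl t₁r
          rw [hlbll, hlblr, hsync]
        · show N₁l.lbl t₁l ∈ N₁l.typ ∩ N₁r.typ
          rw [hlbll, htl, htr]; exact hmemtyp
      · exact hlbll
      · show (SPAux.embedL cl cr).proj1 = (N₁l.pre t₁l).map Sum.inl + (N₁r.pre t₁r).map Sum.inr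
        rw [SPAux.embedL_proj1, hpre1l, hpre1r]
      · show (SPAux.embedL cbarl cbarr).proj1
            = (N₁l.post t₁l).map Sum.inl + (N₁r.post t₁r).map Sum.inr
        rw [SPAux.embedL_proj1, hbl1, hbr1]
      · show (SPAux.embedL cbarl cbarr).proj2
            = (N₂l.post s₁).map Sum.inl + (N₂r.post s₂).map Sum.inr
        rw [SPAux.embedL_proj2, hbl2, hbr2]
      · exact ⟨ll - cl + cbarl, hmeml, lr - cr + cbarr, hmemr, by
          rw [SPAux.embedL_sub hcl hcr, SPAux.embedL_add]⟩
  · show (SPAux.embedL l0l l0r).proj1 = N₁l.M0.map Sum.inl + N₁r.M0.map Sum.inr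
    rw [SPAux.embedL_proj1, hp1l, hp1r]
  · show (SPAux.embedL l0l l0r).proj2 = N₂l.M0.map Sum.inl + N₂r.M0.map Sum.inr
    rw [SPAux.embedL_proj2, hp2l, hp2r]
end

section
/- Structure preserving bisimilarity is a congruence for the CCSP choice operator on nets: if N₁ˡ ≈sp N₂ˡ and N₁ʳ ≈sp N₂ʳ, and the initial markings of N₁ˡ, N₁ʳ, N₂ˡ, N₂ʳ are all nonempty plain sets, then N₁ˡ +_𝒩 N₁ʳ ≈sp N₂ˡ +_𝒩 N₂ʳ. -/
open scoped Classical

/-- Transitions of `N₁ +_𝒩 N₂`: a transition `tᵢ^K` for each transition `tᵢ` of a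
component and each nonempty `K ≤ •tᵢ ∩ Mᵢ`. -/
def choiceTrProp {Act : Type} (N₁ N₂ : PetriNet Act) :
    (N₁.Tr × Multiset N₁.Plc) ⊕ (N₂.Tr × Multiset N₂.Plc) → Prop
  | Sum.inl p => p.2 ≠ 0 ∧ p.2 ≤ N₁.pre p.1 ∧ p.2 ≤ N₁.M0
  | Sum.inr p => p.2 ≠ 0 ∧ p.2 ≤ N₂.pre p.1 ∧ p.2 ≤ N₂.M0

/-- Presets in the choice composition: `•tᵢ^K = •tᵢ − K + (K × M_j)` (with the fresh
places being pairs of initially marked places). -/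
noncomputable def choicePre {Act : Type} (N₁ N₂ : PetriNet Act) :
    (N₁.Tr × Multiset N₁.Plc) ⊕ (N₂.Tr × Multiset N₂.Plc) →
      Multiset (N₁.Plc ⊕ N₂.Plc ⊕ N₁.Plc × N₂.Plc)
  | Sum.inl p => (N₁.pre p.1 - p.2).map Sum.inl +
      (p.2 ×ˢ N₂.M0).map (fun q => Sum.inr (Sum.inr q))
  | Sum.inr p => (N₂.pre p.1 - p.2).map (fun s => Sum.inr (Sum.inl s)) +
      (N₁.M0 ×ˢ p.2).map (fun q => Sum.inr (Sum.inr q))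

/-- Postsets in the choice composition: `(tᵢ^K)• = tᵢ•`. -/
def choicePost {Act : Type} (N₁ N₂ : PetriNet Act) :
    (N₁.Tr × Multiset N₁.Plc) ⊕ (N₂.Tr × Multiset N₂.Plc) →
      Multiset (N₁.Plc ⊕ N₂.Plc ⊕ N₁.Plc × N₂.Plc)
  | Sum.inl p => (N₁.post p.1).map Sum.inl
  | Sum.inr p => (N₂.post p.1).map (fun s => Sum.inr (Sum.inl s))

/-- Labels in the choice composition. -/
def choiceLbl {Act : Type} (N₁ N₂ : PetriNet Act) :
    (N₁.Tr × Multiset N₁.Plc) ⊕ (N₂.Tr × Multiset N₂.Plc) → Act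
  | Sum.inl p => N₁.lbl p.1
  | Sum.inr p => N₂.lbl p.1

/-- The CCSP choice `N₁ +_𝒩 N₂` of two nets (whose initial markings should be nonempty
plain sets); the fresh places `M₁ × M₂` form the new initial marking. -/
noncomputable def choiceNet {Act : Type} (N₁ N₂ : PetriNet Act) : PetriNet Act where
  Plc := N₁.Plc ⊕ N₂.Plc ⊕ N₁.Plc × N₂.Plc
  Tr := {x : (N₁.Tr × Multiset N₁.Plc) ⊕ (N₂.Tr × Multiset N₂.Plc) // choiceTrProp N₁ N₂ x}
  pre := fun t => choicePre N₁ N₂ t.val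
  post := fun t => choicePost N₁ N₂ t.val
  M0 := (N₁.M0 ×ˢ N₂.M0).map (fun q => Sum.inr (Sum.inr q))
  typ := N₁.typ ∪ N₂.typ
  lbl := fun t => choiceLbl N₁ N₂ t.val
  lbl_mem := by
    rintro ⟨x, hx⟩
    rcases x with p | p
    · exact Set.mem_union_left _ (N₁.lbl_mem p.1)
    · exact Set.mem_union_right _ (N₂.lbl_mem p.1)


namespace SPAux
open Multiset

variable {α β γ δ α' β' : Type*}

lemma exists_le_map {f : α → β} : ∀ {c : Multiset β} {s : Multiset α}, c ≤ s.map f →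
    ∃ s', s' ≤ s ∧ s'.map f = c := by
  intro c
  induction c using Multiset.induction with
  | empty => exact fun _ => ⟨0, Multiset.zero_le _, rfl⟩
  | cons x c ih =>
    intro s h
    have hx : x ∈ s.map f := mem_of_le h (mem_cons_self _ _)
    obtain ⟨a, ha, rfl⟩ := mem_map.mp hx
    have hmeq : (s.map f).erase (f a) = (s.erase a).map f := by
      conv_lhs => rw [← cons_erase ha, map_cons, erase_cons_head]
    have h2 : c ≤ (s.erase a).map f := by
      have h' := erase_le_erase (f a) h
      rwa [erase_cons_head, hmeq] at h'
    obtain ⟨s'', hle, hm⟩ := ih h2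
    refine ⟨a ::ₘ s'', ?_, by rw [map_cons, hm]⟩
    rw [← cons_erase ha]
    exact cons_le_cons a hle

lemma map_sprod (f : α → γ) (g : β → δ) (s : Multiset α) (t : Multiset β) :
    (s ×ˢ t).map (Prod.map f g) = (s.map f) ×ˢ (t.map g) := by
  induction s using Multiset.induction with
  | empty => simp
  | cons a s ih =>
    rw [cons_product, map_add, ih, map_cons, cons_product, map_map, map_map]
    congr 1

lemma sprod_swap (s : Multiset α) (t : Multiset β) :
    (s ×ˢ t).map Prod.swap = t ×ˢ s := by
  induction s using Multiset.induction with
  | empty => simp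
  | cons a s ih =>
    rw [cons_product, map_add, ih, map_map, product_cons]
    congr 1

lemma count_sprod [DecidableEq α] [DecidableEq β] (s : Multiset α) (t : Multiset β)
    (a : α) (b : β) : count (a, b) (s ×ˢ t) = count a s * count b t := by
  induction s using Multiset.induction with
  | empty => simp
  | cons c s ih =>
    rw [cons_product, count_add, ih]
    rcases eq_or_ne a c with rfl | h
    · rw [count_cons_self,
        count_map_eq_count' _ _ (fun x y hxy => ((Prod.mk.injEq _ _ _ _).mp hxy).2)]
      ring
    · have h0 : count (a, b) (map (Prod.mk c) t) = 0 := by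
        rw [count_eq_zero]
        intro hmem
        obtain ⟨y, -, hy⟩ := mem_map.mp hmem
        exact h (congrArg Prod.fst hy).symm
      rw [h0, count_cons_of_ne h]
      ring

lemma sprod_le_sprod_left {s s' : Multiset α} (t : Multiset β) (h : s' ≤ s) :
    s' ×ˢ t ≤ s ×ˢ t := by
  obtain ⟨u, rfl⟩ := Multiset.le_iff_exists_add.mp h
  rw [add_product]; exact le_add_right _ _

lemma sprod_le_sprod_right (s : Multiset α) {t t' : Multiset β} (h : t' ≤ t) :
    s ×ˢ t' ≤ s ×ˢ t := by
  obtain ⟨u, rfl⟩ := Multiset.le_iff_exists_add.mp h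
  rw [product_add]; exact le_add_right _ _

lemma sub_sprod [DecidableEq α] [DecidableEq β] {s s' : Multiset α} (t : Multiset β) (h : s' ≤ s) :
    (s - s') ×ˢ t = s ×ˢ t - s' ×ˢ t := by
  obtain ⟨u, rfl⟩ := Multiset.le_iff_exists_add.mp h
  rw [add_tsub_cancel_left, add_product, add_tsub_cancel_left]

lemma sprod_sub [DecidableEq α] [DecidableEq β] (s : Multiset α) {t t' : Multiset β} (h : t' ≤ t) :
    s ×ˢ (t - t') = s ×ˢ t - s ×ˢ t' := by
  obtain ⟨u, rfl⟩ := Multiset.le_iff_exists_add.mp h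
  rw [add_tsub_cancel_left, product_add, add_tsub_cancel_left]

lemma map_sub_of_le [DecidableEq α] [DecidableEq β] {f : α → β} {s s' : Multiset α} (h : s' ≤ s) :
    (s - s').map f = s.map f - s'.map f := by
  obtain ⟨u, rfl⟩ := Multiset.le_iff_exists_add.mp h
  rw [add_tsub_cancel_left, map_add, add_tsub_cancel_left]

lemma eq_of_le_of_map_eq {g : α → β} {d c₁ c₂ : Multiset α}
    (hinj : ∀ p ∈ d, ∀ q ∈ d, g p = g q → p = q)
    (h₁ : c₁ ≤ d) (h₂ : c₂ ≤ d) (h : c₁.map g = c₂.map g) : c₁ = c₂ := by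
  ext p
  by_cases hp : p ∈ d
  · have key : ∀ c : Multiset α, c ≤ d → count p c = count (g p) (c.map g) := by
      intro c hc
      rw [count_map, count_eq_card_filter_eq]
      congr 1
      apply filter_congr
      intro a ha
      constructor
      · rintro rfl; rfl
      · intro hga
        exact hinj p hp a (mem_of_le hc ha) hga
    rw [key c₁ h₁, key c₂ h₂, h]
  · rw [count_eq_zero_of_notMem (fun hh => hp (mem_of_le h₁ hh)),
      count_eq_zero_of_notMem (fun hh => hp (mem_of_le h₂ hh))]

lemma le_of_sprod_le_sprod {A B : Multiset α} {K R : Multiset β}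
    (hK : K ≠ 0) (hR : R.Nodup) (h : A ×ˢ K ≤ B ×ˢ R) : A ≤ B := by
  obtain ⟨u₀, hu₀⟩ := exists_mem_of_ne_zero hK
  rw [le_iff_count]
  intro x
  have h1 : count (x, u₀) (A ×ˢ K) ≤ count (x, u₀) (B ×ˢ R) := count_le_of_le _ h
  rw [count_sprod, count_sprod] at h1
  have h2 : 1 ≤ count u₀ K := one_le_count_iff_mem.mpr hu₀
  have h3 : count u₀ R ≤ 1 := nodup_iff_count_le_one.mp hR u₀
  calc count x A ≤ count x A * count u₀ K := Nat.le_mul_of_pos_right _ h2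
    _ ≤ count x B * count u₀ R := h1
    _ ≤ count x B * 1 := Nat.mul_le_mul_left _ h3
    _ = count x B := by ring

lemma le_of_sprod_le_sprod' {A B : Multiset α} {K R : Multiset β}
    (hK : K ≠ 0) (hR : R.Nodup) (h : K ×ˢ A ≤ R ×ˢ B) : A ≤ B := by
  apply le_of_sprod_le_sprod hK hR
  have := map_le_map (f := Prod.swap) h
  rwa [sprod_swap, sprod_swap] at this

lemma sub_lt_self_of_le [DecidableEq α] {s t : Multiset α} (h : t ≤ s) (h0 : t ≠ 0) : s - t < s := by
  refine lt_of_le_of_ne (tsub_le_self) (fun he => h0 ?_)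
  have hc := card_sub h
  rw [he] at hc
  have := card_le_card h
  rw [← card_eq_zero]
  omega

lemma add_sub_add_of_le [DecidableEq α] {x y u v : Multiset α} (hu : u ≤ x) (hv : v ≤ y) :
    (x + y) - (u + v) = (x - u) + (y - v) := by
  ext a
  have h1 := count_le_of_le a hu
  have h2 := count_le_of_le a hv
  simp only [count_sub, count_add]
  omega

lemma split_le_add {c x y : Multiset α} (P : α → Prop) [DecidablePred P]
    (hx : ∀ a ∈ x, P a) (hy : ∀ a ∈ y, ¬ P a) (h : c ≤ x + y) :
    c.filter P ≤ x ∧ c.filter (fun a => ¬ P a) ≤ y ∧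
      c = c.filter P + c.filter (fun a => ¬ P a) := by
  refine ⟨?_, ?_, (filter_add_not P c).symm⟩
  · have := filter_le_filter P h
    rwa [filter_add, filter_eq_self.mpr hx,
      filter_eq_nil.mpr (fun a ha => (hy a ha) ∘ id), add_zero] at this
  · have := filter_le_filter (fun a => ¬ P a) h
    rwa [filter_add, filter_eq_nil.mpr (fun a (ha : a ∈ x) (hna : ¬ P a) => hna (hx a ha)),
      filter_eq_self.mpr hy, zero_add] at this

lemma add_eq_add_of_pred {m₁ m₂ n₁ n₂ : Multiset α} (P : α → Prop) [DecidablePred P]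
    (h : m₁ + m₂ = n₁ + n₂) (h₁ : ∀ a ∈ m₁, P a) (h₂ : ∀ a ∈ m₂, ¬P a)
    (h₃ : ∀ a ∈ n₁, P a) (h₄ : ∀ a ∈ n₂, ¬P a) : m₁ = n₁ ∧ m₂ = n₂ := by
  constructor
  · have := congrArg (filter P) h
    rwa [filter_add, filter_add, filter_eq_self.mpr h₁, filter_eq_self.mpr h₃,
      filter_eq_nil.mpr h₂, filter_eq_nil.mpr h₄, add_zero, add_zero] at this
  · have := congrArg (filter (fun a => ¬ P a)) h
    rwa [filter_add, filter_add, filter_eq_self.mpr h₂, filter_eq_self.mpr h₄,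
      filter_eq_nil.mpr (fun a ha hna => hna (h₁ a ha)),
      filter_eq_nil.mpr (fun a ha hna => hna (h₃ a ha)), zero_add, zero_add] at this

/-- The key combinatorial lemma: a sub-multiset of a product whose image (under a pair
of maps injective on the components) is a product with full second factor is itself a
product. -/
lemma prod_decomp {f : α → α'} {g : β → β'} {b : Multiset α} {r : Multiset β}
    {d : Multiset (α × β)} {K : Multiset α'}
    (hb : (b.map f).Nodup) (hr : (r.map g).Nodup) (hr0 : r ≠ 0)
    (hd : d ≤ b ×ˢ r) (hK : d.map (Prod.map f g) = K ×ˢ (r.map g)) :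
    ∃ b', b' ≤ b ∧ b'.map f = K ∧ d = b' ×ˢ r := by
  have hbinj : ∀ x ∈ b, ∀ y ∈ b, f x = f y → x = y := inj_on_of_nodup_map hb
  have hrinj : ∀ x ∈ r, ∀ y ∈ r, g x = g y → x = y := inj_on_of_nodup_map hr
  -- K ≤ b.map f
  have hrg0 : r.map g ≠ 0 := by simpa using hr0
  obtain ⟨u₀, hu₀⟩ := exists_mem_of_ne_zero hrg0
  have hKle : K ≤ b.map f := by
    rw [le_iff_count]
    intro x
    have h1 : count (x, u₀) (d.map (Prod.map f g)) ≤
        count (x, u₀) ((b ×ˢ r).map (Prod.map f g)) := count_le_of_le _ (map_le_map hd)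
    rw [hK, map_sprod, count_sprod, count_sprod] at h1
    have h2 : 1 ≤ count u₀ (r.map g) := one_le_count_iff_mem.mpr hu₀
    have h3 : count u₀ (r.map g) ≤ 1 := nodup_iff_count_le_one.mp hr u₀
    calc count x K ≤ count x K * count u₀ (r.map g) := Nat.le_mul_of_pos_right _ h2
      _ ≤ count x (b.map f) * count u₀ (r.map g) := h1
      _ ≤ count x (b.map f) * 1 := Nat.mul_le_mul_left _ h3
      _ = count x (b.map f) := by ring
  obtain ⟨b', hb'le, hb'map⟩ := exists_le_map hKle
  refine ⟨b', hb'le, hb'map, ?_⟩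
  apply eq_of_le_of_map_eq (d := b ×ˢ r) (g := Prod.map f g) ?_ hd
    (sprod_le_sprod_left _ hb'le) (by rw [hK, map_sprod, hb'map])
  rintro ⟨p₁, p₂⟩ hp ⟨q₁, q₂⟩ hq hpq
  have hp' := mem_product.mp hp
  have hq' := mem_product.mp hq
  simp only [Prod.map, Prod.mk.injEq] at hpq
  exact Prod.ext (hbinj _ hp'.1 _ hq'.1 hpq.1) (hrinj _ hp'.2 _ hq'.2 hpq.2)


section ChoiceAux

variable {Act : Type} (N₁l N₁r N₂l N₂r : PetriNet Act)

/-- Embedding of left-component links into the choice composition. -/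
def phiL (p : N₁l.Plc × N₂l.Plc) :
    (choiceNet N₁l N₁r).Plc × (choiceNet N₂l N₂r).Plc :=
  (Sum.inl p.1, Sum.inl p.2)

/-- Embedding of right-component links into the choice composition. -/
def phiR (p : N₁r.Plc × N₂r.Plc) :
    (choiceNet N₁l N₁r).Plc × (choiceNet N₂l N₂r).Plc :=
  (Sum.inr (Sum.inl p.1), Sum.inr (Sum.inl p.2))

/-- Embedding of pairs of links into links between the fresh places. -/
def theta (q : (N₁l.Plc × N₂l.Plc) × (N₁r.Plc × N₂r.Plc)) :
    (choiceNet N₁l N₁r).Plc × (choiceNet N₂l N₂r).Plc :=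
  (Sum.inr (Sum.inr (q.1.1, q.2.1)), Sum.inr (Sum.inr (q.1.2, q.2.2)))

/-- The candidate sp-bisimulation for the choice composition. -/
def ChoiceB (Bl : Set (Linking N₁l N₂l)) (Br : Set (Linking N₁r N₂r))
    (ll : Linking N₁l N₂l) (lr : Linking N₁r N₂r) :
    Set (Linking (choiceNet N₁l N₁r) (choiceNet N₂l N₂r)) :=
  {L | L = (ll ×ˢ lr).map (theta N₁l N₁r N₂l N₂r)
    ∨ (∃ a b, a + b ∈ Bl ∧ b.proj1 < N₁l.M0 ∧ b.proj2 < N₂l.M0 ∧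
        L = a.map (phiL N₁l N₁r N₂l N₂r) + (b ×ˢ lr).map (theta N₁l N₁r N₂l N₂r))
    ∨ (∃ a b, a + b ∈ Br ∧ b.proj1 < N₁r.M0 ∧ b.proj2 < N₂r.M0 ∧
        L = a.map (phiR N₁l N₁r N₂l N₂r) + (ll ×ˢ b).map (theta N₁l N₁r N₂l N₂r))}

lemma map_phiL_fst (x : Linking N₁l N₂l) :
    (x.map (phiL N₁l N₁r N₂l N₂r)).map Prod.fst = (x.map Prod.fst).map Sum.inl := by
  rw [Multiset.map_map, Multiset.map_map]; rfl

lemma map_phiL_snd (x : Linking N₁l N₂l) :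
    (x.map (phiL N₁l N₁r N₂l N₂r)).map Prod.snd = (x.map Prod.snd).map Sum.inl := by
  rw [Multiset.map_map, Multiset.map_map]; rfl

lemma map_phiR_fst (x : Linking N₁r N₂r) :
    (x.map (phiR N₁l N₁r N₂l N₂r)).map Prod.fst
      = (x.map Prod.fst).map (fun s => Sum.inr (Sum.inl s)) := by
  rw [Multiset.map_map, Multiset.map_map]; rfl

lemma map_phiR_snd (x : Linking N₁r N₂r) :
    (x.map (phiR N₁l N₁r N₂l N₂r)).map Prod.snd
      = (x.map Prod.snd).map (fun s => Sum.inr (Sum.inl s)) := by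
  rw [Multiset.map_map, Multiset.map_map]; rfl

lemma map_theta_fst (x : Multiset ((N₁l.Plc × N₂l.Plc) × (N₁r.Plc × N₂r.Plc))) :
    (x.map (theta N₁l N₁r N₂l N₂r)).map Prod.fst
      = (x.map (Prod.map Prod.fst Prod.fst)).map (fun q => Sum.inr (Sum.inr q)) := by
  rw [Multiset.map_map, Multiset.map_map]; rfl

lemma map_theta_snd (x : Multiset ((N₁l.Plc × N₂l.Plc) × (N₁r.Plc × N₂r.Plc))) :
    (x.map (theta N₁l N₁r N₂l N₂r)).map Prod.snd
      = (x.map (Prod.map Prod.snd Prod.snd)).map (fun q => Sum.inr (Sum.inr q)) := by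
  rw [Multiset.map_map, Multiset.map_map]; rfl

lemma iota1_inj : Function.Injective
    (fun q : N₁l.Plc × N₁r.Plc => (Sum.inr (Sum.inr q) : (choiceNet N₁l N₁r).Plc)) :=
  fun x y h => by simpa using h

end ChoiceAux



section ChoiceSim

open Multiset

variable {Act : Type} (N₁l N₁r N₂l N₂r : PetriNet Act)

/-- One-sided simulation property of the candidate bisimulation. -/
lemma choice_sim
    (hm1l : N₁l.M0.Nodup) (hm1r : N₁r.M0.Nodup)
    (hn1l : N₁l.M0 ≠ 0) (hn1r : N₁r.M0 ≠ 0)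
    {Bl : Set (Linking N₁l N₂l)} {Br : Set (Linking N₁r N₂r)}
    (hBl : ∀ c l : Linking N₁l N₂l, l ∈ Bl → c ≤ l → ∀ t₁ : N₁l.Tr,
      c.proj1 = N₁l.pre t₁ → ∃ t₂ : N₂l.Tr, N₂l.lbl t₂ = N₁l.lbl t₁ ∧
        c.proj2 = N₂l.pre t₂ ∧ ∃ cbar : Linking N₁l N₂l, cbar.proj1 = N₁l.post t₁ ∧
          cbar.proj2 = N₂l.post t₂ ∧ l - c + cbar ∈ Bl)
    (hBr : ∀ c l : Linking N₁r N₂r, l ∈ Br → c ≤ l → ∀ t₁ : N₁r.Tr,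
      c.proj1 = N₁r.pre t₁ → ∃ t₂ : N₂r.Tr, N₂r.lbl t₂ = N₁r.lbl t₁ ∧
        c.proj2 = N₂r.pre t₂ ∧ ∃ cbar : Linking N₁r N₂r, cbar.proj1 = N₁r.post t₁ ∧
          cbar.proj2 = N₂r.post t₂ ∧ l - c + cbar ∈ Br)
    {ll : Linking N₁l N₂l} {lr : Linking N₁r N₂r}
    (hllB : ll ∈ Bl) (hlrB : lr ∈ Br)
    (hll1 : ll.proj1 = N₁l.M0) (hll2 : ll.proj2 = N₂l.M0)
    (hlr1 : lr.proj1 = N₁r.M0) (hlr2 : lr.proj2 = N₂r.M0) :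
    ∀ c L : Linking (choiceNet N₁l N₁r) (choiceNet N₂l N₂r),
      L ∈ ChoiceB N₁l N₁r N₂l N₂r Bl Br ll lr → c ≤ L →
      ∀ t₁ : (choiceNet N₁l N₁r).Tr, c.proj1 = (choiceNet N₁l N₁r).pre t₁ →
      ∃ t₂ : (choiceNet N₂l N₂r).Tr,
        (choiceNet N₂l N₂r).lbl t₂ = (choiceNet N₁l N₁r).lbl t₁ ∧
        c.proj2 = (choiceNet N₂l N₂r).pre t₂ ∧
        ∃ cbar : Linking (choiceNet N₁l N₁r) (choiceNet N₂l N₂r),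
          cbar.proj1 = (choiceNet N₁l N₁r).post t₁ ∧
          cbar.proj2 = (choiceNet N₂l N₂r).post t₂ ∧
          L - c + cbar ∈ ChoiceB N₁l N₁r N₂l N₂r Bl Br ll lr := by
  have hlr0 : lr ≠ 0 := fun h => hn1r (by rw [← hlr1, h]; rfl)
  have hll0 : ll ≠ 0 := fun h => hn1l (by rw [← hll1, h]; rfl)
  have hllnd : (ll.map Prod.fst).Nodup := by
    rw [show ll.map Prod.fst = ll.proj1 from rfl, hll1]; exact hm1l
  have hlrnd : (lr.map Prod.fst).Nodup := by
    rw [show lr.map Prod.fst = lr.proj1 from rfl, hlr1]; exact hm1r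
  intro c L hL hc t₁ hpre
  obtain ⟨tk, htk⟩ := t₁
  rcases hL with rfl | ⟨a, b, hab, hb1, hb2, rfl⟩ | ⟨a, b, hab, hb1, hb2, rfl⟩
  -- ════════ Case 1 : initial linking ════════
  · rcases tk with ⟨t, K⟩ | ⟨t, K⟩
    -- ──── Case 1a : left transition ────
    · obtain ⟨hK0, hKpre, hKM⟩ := htk
      have hpre' : c.proj1 = (N₁l.pre t - K).map Sum.inl +
          (K ×ˢ N₁r.M0).map (fun q => Sum.inr (Sum.inr q)) := hpre
      have h0 : N₁l.pre t - K = 0 := by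
        by_contra h0
        obtain ⟨s, hs⟩ := Multiset.exists_mem_of_ne_zero h0
        have h1 : (Sum.inl s : (choiceNet N₁l N₁r).Plc) ∈ c.proj1 := by
          rw [hpre']
          exact Multiset.mem_add.mpr (Or.inl (Multiset.mem_map_of_mem _ hs))
        have h2 := Multiset.mem_of_le (Multiset.map_le_map (f := Prod.fst) hc) h1
        obtain ⟨q, -, hq⟩ := Multiset.mem_map.mp (by
          rwa [Multiset.map_map] at h2)
        simp [theta] at hq
      have hKt : K = N₁l.pre t := le_antisymm hKpre (tsub_eq_zero_iff_le.mp h0)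
      have hpre2 : c.proj1 = (K ×ˢ N₁r.M0).map
          (fun q => (Sum.inr (Sum.inr q) : (choiceNet N₁l N₁r).Plc)) := by
        rw [hpre', h0, Multiset.map_zero]; exact zero_add _
      obtain ⟨d, hdle, hdeq⟩ := exists_le_map hc
      have hg : d.map (Prod.map Prod.fst Prod.fst) = K ×ˢ (lr.map Prod.fst) := by
        apply Multiset.map_injective (iota1_inj N₁l N₁r)
        rw [show lr.map Prod.fst = lr.proj1 from rfl, hlr1]
        rw [← map_theta_fst, hdeq, ← hpre2]
        rfl
      obtain ⟨cl, hclle, hcl1, hdprod⟩ := prod_decomp hllnd hlrnd hlr0 hdle hg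
      obtain ⟨t₂, hlbl, hcl2, cbar, hcbar1, hcbar2, hmem⟩ :=
        hBl cl ll hllB hclle t (hcl1.trans hKt)
      have hcl0 : cl ≠ 0 := by
        rintro rfl
        rw [Multiset.map_zero] at hcl1
        exact hK0 hcl1.symm
      have hK20 : N₂l.pre t₂ ≠ 0 := by
        rw [← hcl2]
        simpa [Linking.proj2, Multiset.map_eq_zero] using hcl0
      have hK2M : N₂l.pre t₂ ≤ N₂l.M0 := by
        rw [← hcl2, ← hll2]
        exact Multiset.map_le_map hclle
      refine ⟨⟨Sum.inl (t₂, N₂l.pre t₂), ⟨hK20, le_refl _, hK2M⟩⟩, hlbl, ?_, ?_⟩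
      · show c.map Prod.snd = (N₂l.pre t₂ - N₂l.pre t₂).map Sum.inl +
          ((N₂l.pre t₂) ×ˢ N₂r.M0).map (fun q => Sum.inr (Sum.inr q))
        rw [tsub_self, Multiset.map_zero]; refine Eq.trans ?_ (zero_add _).symm
        rw [← hdeq, map_theta_snd, hdprod,
          map_sprod, show cl.map Prod.snd = N₂l.pre t₂ from hcl2,
          show lr.map Prod.snd = N₂r.M0 from hlr2]
      · refine ⟨cbar.map (phiL N₁l N₁r N₂l N₂r), ?_, ?_, ?_⟩
        · show (cbar.map (phiL N₁l N₁r N₂l N₂r)).map Prod.fst = (N₁l.post t).map Sum.inl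
          rw [map_phiL_fst, show cbar.map Prod.fst = N₁l.post t from hcbar1]
        · show (cbar.map (phiL N₁l N₁r N₂l N₂r)).map Prod.snd = (N₂l.post t₂).map Sum.inl
          rw [map_phiL_snd, show cbar.map Prod.snd = N₂l.post t₂ from hcbar2]
        · refine Or.inr (Or.inl ⟨cbar, ll - cl, ?_, ?_, ?_, ?_⟩)
          · rwa [add_comm]
          · show (ll - cl).map Prod.fst < N₁l.M0
            rw [map_sub_of_le hclle, show ll.map Prod.fst = N₁l.M0 from hll1,
              hcl1]
            exact sub_lt_self_of_le hKM hK0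
          · show (ll - cl).map Prod.snd < N₂l.M0
            rw [map_sub_of_le hclle, show ll.map Prod.snd = N₂l.M0 from hll2,
              show cl.map Prod.snd = N₂l.pre t₂ from hcl2]
            exact sub_lt_self_of_le hK2M hK20
          · rw [← hdeq, hdprod, ← map_sub_of_le (sprod_le_sprod_left lr hclle),
              ← sub_sprod lr hclle]
            exact add_comm _ _
    -- ──── Case 1b : right transition ────
    · obtain ⟨hK0, hKpre, hKM⟩ := htk
      have hpre' : c.proj1 = (N₁r.pre t - K).map (fun s => Sum.inr (Sum.inl s)) +
          (N₁l.M0 ×ˢ K).map (fun q => Sum.inr (Sum.inr q)) := hpre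
      have h0 : N₁r.pre t - K = 0 := by
        by_contra h0
        obtain ⟨s, hs⟩ := Multiset.exists_mem_of_ne_zero h0
        have h1 : (Sum.inr (Sum.inl s) : (choiceNet N₁l N₁r).Plc) ∈ c.proj1 := by
          rw [hpre']
          exact Multiset.mem_add.mpr (Or.inl (Multiset.mem_map_of_mem _ hs))
        have h2 := Multiset.mem_of_le (Multiset.map_le_map (f := Prod.fst) hc) h1
        obtain ⟨q, -, hq⟩ := Multiset.mem_map.mp (by
          rwa [Multiset.map_map] at h2)
        cases hq
      have hKt : K = N₁r.pre t := le_antisymm hKpre (tsub_eq_zero_iff_le.mp h0)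
      have hpre2 : c.proj1 = (N₁l.M0 ×ˢ K).map
          (fun q => (Sum.inr (Sum.inr q) : (choiceNet N₁l N₁r).Plc)) := by
        rw [hpre', h0, Multiset.map_zero]; exact zero_add _
      obtain ⟨d, hdle, hdeq⟩ := exists_le_map hc
      have hg : d.map (Prod.map Prod.fst Prod.fst) = (ll.map Prod.fst) ×ˢ K := by
        apply Multiset.map_injective (iota1_inj N₁l N₁r)
        rw [show ll.map Prod.fst = ll.proj1 from rfl, hll1]
        rw [← map_theta_fst, hdeq, ← hpre2]
        rfl
      have hg' : (d.map Prod.swap).map (Prod.map Prod.fst Prod.fst)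
          = K ×ˢ (ll.map Prod.fst) := by
        rw [Multiset.map_map,
          show (Prod.map Prod.fst Prod.fst ∘ Prod.swap :
            (N₁l.Plc × N₂l.Plc) × (N₁r.Plc × N₂r.Plc) → N₁r.Plc × N₁l.Plc)
            = Prod.swap ∘ Prod.map Prod.fst Prod.fst from rfl,
          ← Multiset.map_map, hg, sprod_swap]
      have hdle' : d.map Prod.swap ≤ lr ×ˢ ll := by
        have h := Multiset.map_le_map (f := Prod.swap) hdle
        rwa [sprod_swap] at h
      obtain ⟨cr, hcrle, hcr1, hdprod'⟩ := prod_decomp hlrnd hllnd hll0 hdle' hg'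
      have hdprod : d = ll ×ˢ cr := by
        have h := congrArg (Multiset.map Prod.swap) hdprod'
        rwa [Multiset.map_map, show (Prod.swap ∘ Prod.swap :
            (N₁l.Plc × N₂l.Plc) × (N₁r.Plc × N₂r.Plc) → _) = id from rfl,
          Multiset.map_id, sprod_swap] at h
      obtain ⟨t₂, hlbl, hcr2, cbar, hcbar1, hcbar2, hmem⟩ :=
        hBr cr lr hlrB hcrle t (hcr1.trans hKt)
      have hcr0 : cr ≠ 0 := by
        rintro rfl
        rw [Multiset.map_zero] at hcr1
        exact hK0 hcr1.symm
      have hK20 : N₂r.pre t₂ ≠ 0 := by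
        rw [← hcr2]
        simpa [Linking.proj2, Multiset.map_eq_zero] using hcr0
      have hK2M : N₂r.pre t₂ ≤ N₂r.M0 := by
        rw [← hcr2, ← hlr2]
        exact Multiset.map_le_map hcrle
      refine ⟨⟨Sum.inr (t₂, N₂r.pre t₂), ⟨hK20, le_refl _, hK2M⟩⟩, hlbl, ?_, ?_⟩
      · show c.map Prod.snd = (N₂r.pre t₂ - N₂r.pre t₂).map (fun s => Sum.inr (Sum.inl s)) +
          (N₂l.M0 ×ˢ (N₂r.pre t₂)).map (fun q => Sum.inr (Sum.inr q))
        rw [tsub_self, Multiset.map_zero]; refine Eq.trans ?_ (zero_add _).symm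
        rw [← hdeq, map_theta_snd, hdprod,
          map_sprod, show ll.map Prod.snd = N₂l.M0 from hll2,
          show cr.map Prod.snd = N₂r.pre t₂ from hcr2]
      · refine ⟨cbar.map (phiR N₁l N₁r N₂l N₂r), ?_, ?_, ?_⟩
        · show (cbar.map (phiR N₁l N₁r N₂l N₂r)).map Prod.fst
            = (N₁r.post t).map (fun s => Sum.inr (Sum.inl s))
          rw [map_phiR_fst, show cbar.map Prod.fst = N₁r.post t from hcbar1]
        · show (cbar.map (phiR N₁l N₁r N₂l N₂r)).map Prod.snd
            = (N₂r.post t₂).map (fun s => Sum.inr (Sum.inl s))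
          rw [map_phiR_snd, show cbar.map Prod.snd = N₂r.post t₂ from hcbar2]
        · refine Or.inr (Or.inr ⟨cbar, lr - cr, ?_, ?_, ?_, ?_⟩)
          · rwa [add_comm]
          · show (lr - cr).map Prod.fst < N₁r.M0
            rw [map_sub_of_le hcrle, show lr.map Prod.fst = N₁r.M0 from hlr1, hcr1]
            exact sub_lt_self_of_le hKM hK0
          · show (lr - cr).map Prod.snd < N₂r.M0
            rw [map_sub_of_le hcrle, show lr.map Prod.snd = N₂r.M0 from hlr2,
              show cr.map Prod.snd = N₂r.pre t₂ from hcr2]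
            exact sub_lt_self_of_le hK2M hK20
          · rw [← hdeq, hdprod, ← map_sub_of_le (sprod_le_sprod_right ll hcrle),
              ← sprod_sub ll hcrle]
            exact add_comm _ _
  -- ════════ Case 2 : left component active ════════
  · have hbnd : (b.map Prod.fst).Nodup :=
      Multiset.nodup_of_le (le_of_lt hb1) hm1l
    obtain ⟨hcPle, hcQle, hcsplit⟩ := split_le_add
      (fun x : (choiceNet N₁l N₁r).Plc × (choiceNet N₂l N₂r).Plc => ∃ s, x.1 = Sum.inl s)
      (fun y hy => by
        obtain ⟨p, -, rfl⟩ := Multiset.mem_map.mp hy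
        exact ⟨p.1, rfl⟩)
      (fun y hy => by
        rintro ⟨s, hs⟩
        obtain ⟨q, -, rfl⟩ := Multiset.mem_map.mp hy
        simp [theta] at hs) hc
    rcases tk with ⟨t, K⟩ | ⟨t, K⟩
    -- ──── Case 2a : left transition (the active component moves) ────
    · obtain ⟨hK0, hKpre, hKM⟩ := htk
      have hpre' : c.proj1 = (N₁l.pre t - K).map Sum.inl +
          (K ×ˢ N₁r.M0).map (fun q => Sum.inr (Sum.inr q)) := hpre
      have heq : (Multiset.filter (fun x => ∃ s, x.1 = Sum.inl s) c).map Prod.fst +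
          (Multiset.filter (fun x => ¬ ∃ s, x.1 = Sum.inl s) c).map Prod.fst =
          (N₁l.pre t - K).map Sum.inl +
          (K ×ˢ N₁r.M0).map (fun q => Sum.inr (Sum.inr q)) := by
        rw [← Multiset.map_add]; exact Eq.trans (congrArg _ hcsplit.symm) hpre'
      obtain ⟨hfst1, hfst2⟩ := add_eq_add_of_pred
        (fun y : (choiceNet N₁l N₁r).Plc => ∃ s, y = Sum.inl s) heq
        (fun y hy => by
          obtain ⟨x, hx, rfl⟩ := Multiset.mem_map.mp hy
          obtain ⟨s, hs⟩ := Multiset.of_mem_filter hx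
          exact ⟨s, hs⟩)
        (fun y hy => by
          obtain ⟨x, hx, rfl⟩ := Multiset.mem_map.mp hy
          have hx2 := Multiset.mem_of_le hcQle hx
          obtain ⟨q, -, rfl⟩ := Multiset.mem_map.mp hx2
          rintro ⟨s, hs⟩
          simp [theta] at hs)
        (fun y hy => by
          obtain ⟨s, -, rfl⟩ := Multiset.mem_map.mp hy
          exact ⟨s, rfl⟩)
        (fun y hy => by
          rintro ⟨s, hs⟩
          obtain ⟨q, -, rfl⟩ := Multiset.mem_map.mp hy
          simp at hs)
      obtain ⟨ca, hcale, hcaeq⟩ := exists_le_map hcPle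
      have hinl : Function.Injective (Sum.inl : N₁l.Plc → (choiceNet N₁l N₁r).Plc) :=
        Sum.inl_injective
      have hca1 : ca.map Prod.fst = N₁l.pre t - K := by
        apply Multiset.map_injective hinl
        rw [← map_phiL_fst, hcaeq]
        exact hfst1
      obtain ⟨d, hdle, hdeq⟩ := exists_le_map hcQle
      have hg : d.map (Prod.map Prod.fst Prod.fst) = K ×ˢ (lr.map Prod.fst) := by
        apply Multiset.map_injective (iota1_inj N₁l N₁r)
        rw [show lr.map Prod.fst = lr.proj1 from rfl, hlr1, ← map_theta_fst, hdeq]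
        exact hfst2
      obtain ⟨cb, hcble, hcb1, hdprod⟩ := prod_decomp hbnd hlrnd hlr0 hdle hg
      have hccpre : (ca + cb).map Prod.fst = N₁l.pre t := by
        rw [Multiset.map_add, hca1, hcb1, tsub_add_cancel_of_le hKpre]
      obtain ⟨t₂, hlbl, h2, cbar, hcbar1, hcbar2, hmem⟩ :=
        hBl (ca + cb) (a + b) hab (add_le_add hcale hcble) t hccpre
      have h2' : ca.map Prod.snd + cb.map Prod.snd = N₂l.pre t₂ := by
        rw [← Multiset.map_add]; exact h2
      have hcb0 : cb ≠ 0 := by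
        rintro rfl; rw [Multiset.map_zero] at hcb1; exact hK0 hcb1.symm
      have hK20 : cb.map Prod.snd ≠ 0 := by
        simpa [Multiset.map_eq_zero] using hcb0
      have hK2pre : cb.map Prod.snd ≤ N₂l.pre t₂ := h2' ▸ le_add_self
      have hK2M : cb.map Prod.snd ≤ N₂l.M0 :=
        (Multiset.map_le_map hcble).trans (le_of_lt hb2)
      refine ⟨⟨Sum.inl (t₂, cb.map Prod.snd), ⟨hK20, hK2pre, hK2M⟩⟩, hlbl, ?_, ?_⟩
      · show c.map Prod.snd = (N₂l.pre t₂ - cb.map Prod.snd).map Sum.inl +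
          ((cb.map Prod.snd) ×ˢ N₂r.M0).map (fun q => Sum.inr (Sum.inr q))
        have hca2 : ca.map Prod.snd = N₂l.pre t₂ - cb.map Prod.snd :=
          eq_tsub_of_add_eq h2'
        conv_lhs => rw [hcsplit]
        rw [Multiset.map_add, ← hcaeq, ← hdeq, map_phiL_snd, map_theta_snd, hca2,
          hdprod, map_sprod, show lr.map Prod.snd = N₂r.M0 from hlr2]
        rfl
      · refine ⟨cbar.map (phiL N₁l N₁r N₂l N₂r), ?_, ?_, ?_⟩
        · show (cbar.map (phiL N₁l N₁r N₂l N₂r)).map Prod.fst = (N₁l.post t).map Sum.inl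
          rw [map_phiL_fst, show cbar.map Prod.fst = N₁l.post t from hcbar1]
        · show (cbar.map (phiL N₁l N₁r N₂l N₂r)).map Prod.snd = (N₂l.post t₂).map Sum.inl
          rw [map_phiL_snd, show cbar.map Prod.snd = N₂l.post t₂ from hcbar2]
        · refine Or.inr (Or.inl ⟨a - ca + cbar, b - cb, ?_, ?_, ?_, ?_⟩)
          · have hre : a - ca + cbar + (b - cb) = a + b - (ca + cb) + cbar := by
              rw [add_sub_add_of_le hcale hcble, add_right_comm]
            rw [hre]; exact hmem
          · show (b - cb).map Prod.fst < N₁l.M0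
            exact lt_of_le_of_lt (Multiset.map_le_map tsub_le_self) hb1
          · show (b - cb).map Prod.snd < N₂l.M0
            exact lt_of_le_of_lt (Multiset.map_le_map tsub_le_self) hb2
          · rw [hcsplit, ← hcaeq, ← hdeq, hdprod,
              add_sub_add_of_le (Multiset.map_le_map hcale)
                (Multiset.map_le_map (sprod_le_sprod_left lr hcble)),
              ← map_sub_of_le hcale, ← map_sub_of_le (sprod_le_sprod_left lr hcble),
              ← sub_sprod lr hcble, Multiset.map_add, add_right_comm]
    -- ──── Case 2b : right transition (impossible) ────
    · obtain ⟨hK0, hKpre, hKM⟩ := htk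
      exfalso
      have hpre' : c.proj1 = (N₁r.pre t - K).map (fun s => Sum.inr (Sum.inl s)) +
          (N₁l.M0 ×ˢ K).map (fun q => Sum.inr (Sum.inr q)) := hpre
      have hnomid : ∀ y ∈ c.map Prod.fst, ∀ s : N₁r.Plc, y ≠ Sum.inr (Sum.inl s) := by
        intro y hy s
        have h2 := Multiset.mem_of_le (Multiset.map_le_map (f := Prod.fst) hc) hy
        rw [Multiset.map_add] at h2
        rcases Multiset.mem_add.mp h2 with h3 | h3
        · obtain ⟨p, -, rfl⟩ := Multiset.mem_map.mp (by rwa [Multiset.map_map] at h3)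
          exact fun h => by cases h
        · obtain ⟨q, -, rfl⟩ := Multiset.mem_map.mp (by rwa [Multiset.map_map] at h3)
          exact fun h => by cases h
      have h0 : N₁r.pre t - K = 0 := by
        by_contra h0
        obtain ⟨s, hs⟩ := Multiset.exists_mem_of_ne_zero h0
        refine hnomid (Sum.inr (Sum.inl s)) ?_ s rfl
        rw [show c.map Prod.fst = c.proj1 from rfl, hpre']
        exact Multiset.mem_add.mpr (Or.inl (Multiset.mem_map_of_mem _ hs))
      have hpre2 : c.proj1 = (N₁l.M0 ×ˢ K).map
          (fun q => (Sum.inr (Sum.inr q) : (choiceNet N₁l N₁r).Plc)) := by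
        rw [hpre', h0, Multiset.map_zero]; exact zero_add _
      have hcP0 : Multiset.filter
          (fun x : (choiceNet N₁l N₁r).Plc × (choiceNet N₂l N₂r).Plc =>
            ∃ s, x.1 = Sum.inl s) c = 0 := by
        rw [Multiset.filter_eq_nil]
        rintro x hx ⟨s, hs⟩
        have hmm : x.1 ∈ c.map Prod.fst := Multiset.mem_map_of_mem _ hx
        rw [show c.map Prod.fst = c.proj1 from rfl, hpre2] at hmm
        obtain ⟨q, -, hq⟩ := Multiset.mem_map.mp hmm
        rw [hs] at hq
        cases hq
      have hcle : c ≤ (b ×ˢ lr).map (theta N₁l N₁r N₂l N₂r) := by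
        conv_lhs => rw [hcsplit]
        rw [hcP0, zero_add]
        exact hcQle
      obtain ⟨d, hdle, hdeq⟩ := exists_le_map hcle
      have hg : d.map (Prod.map Prod.fst Prod.fst) = N₁l.M0 ×ˢ K := by
        apply Multiset.map_injective (iota1_inj N₁l N₁r)
        rw [← map_theta_fst, hdeq]
        exact hpre2
      have hle2 : N₁l.M0 ×ˢ K ≤ (b.map Prod.fst) ×ˢ (lr.map Prod.fst) := by
        rw [← hg, ← map_sprod]
        exact Multiset.map_le_map hdle
      have hcon : N₁l.M0 ≤ b.map Prod.fst := le_of_sprod_le_sprod hK0 hlrnd hle2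
      exact absurd hcon hb1.not_ge
  -- ════════ Case 3 : right component active ════════
  · have hbnd : (b.map Prod.fst).Nodup :=
      Multiset.nodup_of_le (le_of_lt hb1) hm1r
    obtain ⟨hcPle, hcQle, hcsplit⟩ := split_le_add
      (fun x : (choiceNet N₁l N₁r).Plc × (choiceNet N₂l N₂r).Plc =>
        ∃ s, x.1 = Sum.inr (Sum.inl s))
      (fun y hy => by
        obtain ⟨p, -, rfl⟩ := Multiset.mem_map.mp hy
        exact ⟨p.1, rfl⟩)
      (fun y hy => by
        rintro ⟨s, hs⟩
        obtain ⟨q, -, rfl⟩ := Multiset.mem_map.mp hy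
        cases hs) hc
    rcases tk with ⟨t, K⟩ | ⟨t, K⟩
    -- ──── Case 3a : left transition (impossible) ────
    · obtain ⟨hK0, hKpre, hKM⟩ := htk
      exfalso
      have hpre' : c.proj1 = (N₁l.pre t - K).map Sum.inl +
          (K ×ˢ N₁r.M0).map (fun q => Sum.inr (Sum.inr q)) := hpre
      have hnol : ∀ y ∈ c.map Prod.fst, ∀ s : N₁l.Plc, y ≠ Sum.inl s := by
        intro y hy s
        have h2 := Multiset.mem_of_le (Multiset.map_le_map (f := Prod.fst) hc) hy
        rw [Multiset.map_add] at h2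
        rcases Multiset.mem_add.mp h2 with h3 | h3
        · obtain ⟨p, -, rfl⟩ := Multiset.mem_map.mp (by rwa [Multiset.map_map] at h3)
          exact fun h => by cases h
        · obtain ⟨q, -, rfl⟩ := Multiset.mem_map.mp (by rwa [Multiset.map_map] at h3)
          exact fun h => by cases h
      have h0 : N₁l.pre t - K = 0 := by
        by_contra h0
        obtain ⟨s, hs⟩ := Multiset.exists_mem_of_ne_zero h0
        refine hnol (Sum.inl s) ?_ s rfl
        rw [show c.map Prod.fst = c.proj1 from rfl, hpre']
        exact Multiset.mem_add.mpr (Or.inl (Multiset.mem_map_of_mem _ hs))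
      have hpre2 : c.proj1 = (K ×ˢ N₁r.M0).map
          (fun q => (Sum.inr (Sum.inr q) : (choiceNet N₁l N₁r).Plc)) := by
        rw [hpre', h0, Multiset.map_zero]; exact zero_add _
      have hcP0 : Multiset.filter
          (fun x : (choiceNet N₁l N₁r).Plc × (choiceNet N₂l N₂r).Plc =>
            ∃ s, x.1 = Sum.inr (Sum.inl s)) c = 0 := by
        rw [Multiset.filter_eq_nil]
        rintro x hx ⟨s, hs⟩
        have hmm : x.1 ∈ c.map Prod.fst := Multiset.mem_map_of_mem _ hx
        rw [show c.map Prod.fst = c.proj1 from rfl, hpre2] at hmm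
        obtain ⟨q, -, hq⟩ := Multiset.mem_map.mp hmm
        rw [hs] at hq
        cases hq
      have hcle : c ≤ (ll ×ˢ b).map (theta N₁l N₁r N₂l N₂r) := by
        conv_lhs => rw [hcsplit]
        rw [hcP0, zero_add]
        exact hcQle
      obtain ⟨d, hdle, hdeq⟩ := exists_le_map hcle
      have hg : d.map (Prod.map Prod.fst Prod.fst) = K ×ˢ N₁r.M0 := by
        apply Multiset.map_injective (iota1_inj N₁l N₁r)
        rw [← map_theta_fst, hdeq]
        exact hpre2
      have hle2 : K ×ˢ N₁r.M0 ≤ (ll.map Prod.fst) ×ˢ (b.map Prod.fst) := by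
        rw [← hg, ← map_sprod]
        exact Multiset.map_le_map hdle
      have hcon : N₁r.M0 ≤ b.map Prod.fst :=
        le_of_sprod_le_sprod' hK0 hllnd hle2
      exact absurd hcon hb1.not_ge
    -- ──── Case 3b : right transition (the active component moves) ────
    · obtain ⟨hK0, hKpre, hKM⟩ := htk
      have hpre' : c.proj1 = (N₁r.pre t - K).map (fun s => Sum.inr (Sum.inl s)) +
          (N₁l.M0 ×ˢ K).map (fun q => Sum.inr (Sum.inr q)) := hpre
      have heq : (Multiset.filter (fun x => ∃ s, x.1 = Sum.inr (Sum.inl s)) c).map Prod.fst +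
          (Multiset.filter (fun x => ¬ ∃ s, x.1 = Sum.inr (Sum.inl s)) c).map Prod.fst =
          (N₁r.pre t - K).map (fun s => Sum.inr (Sum.inl s)) +
          (N₁l.M0 ×ˢ K).map (fun q => Sum.inr (Sum.inr q)) := by
        rw [← Multiset.map_add]; exact Eq.trans (congrArg _ hcsplit.symm) hpre'
      obtain ⟨hfst1, hfst2⟩ := add_eq_add_of_pred
        (fun y : (choiceNet N₁l N₁r).Plc => ∃ s, y = Sum.inr (Sum.inl s)) heq
        (fun y hy => by
          obtain ⟨x, hx, rfl⟩ := Multiset.mem_map.mp hy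
          obtain ⟨s, hs⟩ := Multiset.of_mem_filter hx
          exact ⟨s, hs⟩)
        (fun y hy => by
          obtain ⟨x, hx, rfl⟩ := Multiset.mem_map.mp hy
          have hx2 := Multiset.mem_of_le hcQle hx
          obtain ⟨q, -, rfl⟩ := Multiset.mem_map.mp hx2
          rintro ⟨s, hs⟩
          cases hs)
        (fun y hy => by
          obtain ⟨s, -, rfl⟩ := Multiset.mem_map.mp hy
          exact ⟨s, rfl⟩)
        (fun y hy => by
          rintro ⟨s, hs⟩
          obtain ⟨q, -, rfl⟩ := Multiset.mem_map.mp hy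
          cases hs)
      obtain ⟨ca, hcale, hcaeq⟩ := exists_le_map hcPle
      have hmid_inj : Function.Injective
          (fun s : N₁r.Plc => (Sum.inr (Sum.inl s) : (choiceNet N₁l N₁r).Plc)) :=
        fun x y h => by simpa using h
      have hca1 : ca.map Prod.fst = N₁r.pre t - K := by
        apply Multiset.map_injective hmid_inj
        rw [← map_phiR_fst, hcaeq]
        exact hfst1
      obtain ⟨d, hdle, hdeq⟩ := exists_le_map hcQle
      have hg : d.map (Prod.map Prod.fst Prod.fst) = (ll.map Prod.fst) ×ˢ K := by
        apply Multiset.map_injective (iota1_inj N₁l N₁r)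
        rw [show ll.map Prod.fst = ll.proj1 from rfl, hll1, ← map_theta_fst, hdeq]
        exact hfst2
      have hg' : (d.map Prod.swap).map (Prod.map Prod.fst Prod.fst)
          = K ×ˢ (ll.map Prod.fst) := by
        rw [Multiset.map_map,
          show (Prod.map Prod.fst Prod.fst ∘ Prod.swap :
            (N₁l.Plc × N₂l.Plc) × (N₁r.Plc × N₂r.Plc) → N₁r.Plc × N₁l.Plc)
            = Prod.swap ∘ Prod.map Prod.fst Prod.fst from rfl,
          ← Multiset.map_map, hg, sprod_swap]
      have hdle' : d.map Prod.swap ≤ b ×ˢ ll := by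
        have h := Multiset.map_le_map (f := Prod.swap) hdle
        rwa [sprod_swap] at h
      obtain ⟨cb, hcble, hcb1, hdprod'⟩ := prod_decomp hbnd hllnd hll0 hdle' hg'
      have hdprod : d = ll ×ˢ cb := by
        have h := congrArg (Multiset.map Prod.swap) hdprod'
        rwa [Multiset.map_map, show (Prod.swap ∘ Prod.swap :
            (N₁l.Plc × N₂l.Plc) × (N₁r.Plc × N₂r.Plc) → _) = id from rfl,
          Multiset.map_id, sprod_swap] at h
      have hccpre : (ca + cb).map Prod.fst = N₁r.pre t := by
        rw [Multiset.map_add, hca1, hcb1, tsub_add_cancel_of_le hKpre]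
      obtain ⟨t₂, hlbl, h2, cbar, hcbar1, hcbar2, hmem⟩ :=
        hBr (ca + cb) (a + b) hab (add_le_add hcale hcble) t hccpre
      have h2' : ca.map Prod.snd + cb.map Prod.snd = N₂r.pre t₂ := by
        rw [← Multiset.map_add]; exact h2
      have hcb0 : cb ≠ 0 := by
        rintro rfl; rw [Multiset.map_zero] at hcb1; exact hK0 hcb1.symm
      have hK20 : cb.map Prod.snd ≠ 0 := by
        simpa [Multiset.map_eq_zero] using hcb0
      have hK2pre : cb.map Prod.snd ≤ N₂r.pre t₂ := h2' ▸ le_add_self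
      have hK2M : cb.map Prod.snd ≤ N₂r.M0 :=
        (Multiset.map_le_map hcble).trans (le_of_lt hb2)
      refine ⟨⟨Sum.inr (t₂, cb.map Prod.snd), ⟨hK20, hK2pre, hK2M⟩⟩, hlbl, ?_, ?_⟩
      · show c.map Prod.snd
          = (N₂r.pre t₂ - cb.map Prod.snd).map (fun s => Sum.inr (Sum.inl s)) +
            (N₂l.M0 ×ˢ (cb.map Prod.snd)).map (fun q => Sum.inr (Sum.inr q))
        have hca2 : ca.map Prod.snd = N₂r.pre t₂ - cb.map Prod.snd :=
          eq_tsub_of_add_eq h2'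
        conv_lhs => rw [hcsplit]
        rw [Multiset.map_add, ← hcaeq, ← hdeq, map_phiR_snd, map_theta_snd, hca2,
          hdprod, map_sprod, show ll.map Prod.snd = N₂l.M0 from hll2]
        rfl
      · refine ⟨cbar.map (phiR N₁l N₁r N₂l N₂r), ?_, ?_, ?_⟩
        · show (cbar.map (phiR N₁l N₁r N₂l N₂r)).map Prod.fst
            = (N₁r.post t).map (fun s => Sum.inr (Sum.inl s))
          rw [map_phiR_fst, show cbar.map Prod.fst = N₁r.post t from hcbar1]
        · show (cbar.map (phiR N₁l N₁r N₂l N₂r)).map Prod.snd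
            = (N₂r.post t₂).map (fun s => Sum.inr (Sum.inl s))
          rw [map_phiR_snd, show cbar.map Prod.snd = N₂r.post t₂ from hcbar2]
        · refine Or.inr (Or.inr ⟨a - ca + cbar, b - cb, ?_, ?_, ?_, ?_⟩)
          · have hre : a - ca + cbar + (b - cb) = a + b - (ca + cb) + cbar := by
              rw [add_sub_add_of_le hcale hcble, add_right_comm]
            rw [hre]; exact hmem
          · show (b - cb).map Prod.fst < N₁r.M0
            exact lt_of_le_of_lt (Multiset.map_le_map tsub_le_self) hb1
          · show (b - cb).map Prod.snd < N₂r.M0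
            exact lt_of_le_of_lt (Multiset.map_le_map tsub_le_self) hb2
          · rw [hcsplit, ← hcaeq, ← hdeq, hdprod,
              add_sub_add_of_le (Multiset.map_le_map hcale)
                (Multiset.map_le_map (sprod_le_sprod_right ll hcble)),
              ← map_sub_of_le hcale, ← map_sub_of_le (sprod_le_sprod_right ll hcble),
              ← sprod_sub ll hcble, Multiset.map_add, add_right_comm]

end ChoiceSim

section Swap

open Multiset

lemma map_swap_swap {α β : Type*} (l : Multiset (α × β)) :
    (l.map Prod.swap).map Prod.swap = l := by
  rw [Multiset.map_map, show (Prod.swap ∘ Prod.swap : α × β → α × β) = id from rfl,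
    Multiset.map_id]

lemma map_swap_fst {α β : Type*} (l : Multiset (α × β)) :
    (l.map Prod.swap).map Prod.fst = l.map Prod.snd := by
  rw [Multiset.map_map]; rfl

lemma map_swap_snd {α β : Type*} (l : Multiset (α × β)) :
    (l.map Prod.swap).map Prod.snd = l.map Prod.fst := by
  rw [Multiset.map_map]; rfl

variable {Act : Type} (N₁l N₁r N₂l N₂r : PetriNet Act)

lemma theta_map_swap (x : Linking N₁l N₂l) (y : Linking N₁r N₂r) :
    ((x ×ˢ y).map (theta N₁l N₁r N₂l N₂r)).map Prod.swap
      = ((x.map Prod.swap) ×ˢ (y.map Prod.swap)).map (theta N₂l N₂r N₁l N₁r) := by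
  rw [← map_sprod, Multiset.map_map, Multiset.map_map]
  rfl

lemma phiL_map_swap (x : Linking N₁l N₂l) :
    (x.map (phiL N₁l N₁r N₂l N₂r)).map Prod.swap
      = (x.map Prod.swap).map (phiL N₂l N₂r N₁l N₁r) := by
  rw [Multiset.map_map, Multiset.map_map]; rfl

lemma phiR_map_swap (x : Linking N₁r N₂r) :
    (x.map (phiR N₁l N₁r N₂l N₂r)).map Prod.swap
      = (x.map Prod.swap).map (phiR N₂l N₂r N₁l N₁r) := by
  rw [Multiset.map_map, Multiset.map_map]; rfl

lemma mem_choiceB_swap {Bl : Set (Linking N₁l N₂l)} {Br : Set (Linking N₁r N₂r)}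
    {ll : Linking N₁l N₂l} {lr : Linking N₁r N₂r}
    {L : Linking (choiceNet N₁l N₁r) (choiceNet N₂l N₂r)}
    (h : L ∈ ChoiceB N₁l N₁r N₂l N₂r Bl Br ll lr) :
    L.map Prod.swap ∈ ChoiceB N₂l N₂r N₁l N₁r
      {m | m.map Prod.swap ∈ Bl} {m | m.map Prod.swap ∈ Br}
      (ll.map Prod.swap) (lr.map Prod.swap) := by
  rcases h with rfl | ⟨a, b, hab, hb1, hb2, rfl⟩ | ⟨a, b, hab, hb1, hb2, rfl⟩
  · exact Or.inl (theta_map_swap N₁l N₁r N₂l N₂r ll lr)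
  · refine Or.inr (Or.inl ⟨a.map Prod.swap, b.map Prod.swap, ?_, ?_, ?_, ?_⟩)
    · show (a.map Prod.swap + b.map Prod.swap).map Prod.swap ∈ Bl
      rw [Multiset.map_add, map_swap_swap, map_swap_swap]
      exact hab
    · show (b.map Prod.swap).map Prod.fst < N₂l.M0
      rw [map_swap_fst]
      exact hb2
    · show (b.map Prod.swap).map Prod.snd < N₁l.M0
      rw [map_swap_snd]
      exact hb1
    · rw [Multiset.map_add, phiL_map_swap, theta_map_swap]
  · refine Or.inr (Or.inr ⟨a.map Prod.swap, b.map Prod.swap, ?_, ?_, ?_, ?_⟩)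
    · show (a.map Prod.swap + b.map Prod.swap).map Prod.swap ∈ Br
      rw [Multiset.map_add, map_swap_swap, map_swap_swap]
      exact hab
    · show (b.map Prod.swap).map Prod.fst < N₂r.M0
      rw [map_swap_fst]
      exact hb2
    · show (b.map Prod.swap).map Prod.snd < N₁r.M0
      rw [map_swap_snd]
      exact hb1
    · rw [Multiset.map_add, phiR_map_swap, theta_map_swap]

/-- The second clause of an sp-bisimulation gives the first clause of the swapped
relation. -/
lemma swap_clause {N₁ N₂ : PetriNet Act} {B : Set (Linking N₁ N₂)}
    (h : ∀ c l : Linking N₁ N₂, l ∈ B → c ≤ l → ∀ t₂ : N₂.Tr, c.proj2 = N₂.pre t₂ →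
      ∃ t₁ : N₁.Tr, N₁.lbl t₁ = N₂.lbl t₂ ∧ c.proj1 = N₁.pre t₁ ∧
        ∃ cbar : Linking N₁ N₂, cbar.proj1 = N₁.post t₁ ∧ cbar.proj2 = N₂.post t₂ ∧
          l - c + cbar ∈ B) :
    ∀ c l : Linking N₂ N₁, l ∈ {m : Linking N₂ N₁ | m.map Prod.swap ∈ B} → c ≤ l →
      ∀ t₁ : N₂.Tr, c.proj1 = N₂.pre t₁ →
      ∃ t₂ : N₁.Tr, N₁.lbl t₂ = N₂.lbl t₁ ∧ c.proj2 = N₁.pre t₂ ∧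
        ∃ cbar : Linking N₂ N₁, cbar.proj1 = N₂.post t₁ ∧ cbar.proj2 = N₁.post t₂ ∧
          l - c + cbar ∈ {m : Linking N₂ N₁ | m.map Prod.swap ∈ B} := by
  intro c l hlB hcl t hp
  obtain ⟨t₁, hlbl, hq, cbar, hcb1, hcb2, hmem⟩ :=
    h (c.map Prod.swap) (l.map Prod.swap) hlB (Multiset.map_le_map hcl) t
      (by show (c.map Prod.swap).map Prod.snd = N₂.pre t
          rw [map_swap_snd]; exact hp)
  refine ⟨t₁, hlbl, ?_, cbar.map Prod.swap, ?_, ?_, ?_⟩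
  · show c.map Prod.snd = N₁.pre t₁
    rw [← map_swap_fst]; exact hq
  · show (cbar.map Prod.swap).map Prod.fst = N₂.post t
    rw [map_swap_fst]; exact hcb2
  · show (cbar.map Prod.swap).map Prod.snd = N₁.post t₁
    rw [map_swap_snd]; exact hcb1
  · show (l - c + cbar.map Prod.swap).map Prod.swap ∈ B
    rw [Multiset.map_add, map_sub_of_le hcl, map_swap_swap]
    exact hmem

end Swap

end SPAux

/-- Structure preserving bisimilarity is a congruence for the CCSP choice operator on
nets whose initial markings are nonempty plain sets. -/
theorem spBisimilar_congr_choice {Act : Type} (N₁l N₁r N₂l N₂r : PetriNet Act)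
    (h₁l : N₁l.BoundedParallelism) (h₁r : N₁r.BoundedParallelism)
    (h₂l : N₂l.BoundedParallelism) (h₂r : N₂r.BoundedParallelism)
    (hm₁l : N₁l.M0.Nodup) (hm₁r : N₁r.M0.Nodup)
    (hm₂l : N₂l.M0.Nodup) (hm₂r : N₂r.M0.Nodup)
    (hn₁l : N₁l.M0 ≠ 0) (hn₁r : N₁r.M0 ≠ 0)
    (hn₂l : N₂l.M0 ≠ 0) (hn₂r : N₂r.M0 ≠ 0)
    (hl : SPBisimilar N₁l N₂l) (hr : SPBisimilar N₁r N₂r) :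
    SPBisimilar (choiceNet N₁l N₁r) (choiceNet N₂l N₂r) := by
  obtain ⟨htypl, Bl, hBl, ll, hllB, hll1, hll2⟩ := hl
  obtain ⟨htypr, Br, hBr, lr, hlrB, hlr1, hlr2⟩ := hr
  refine ⟨?_, SPAux.ChoiceB N₁l N₁r N₂l N₂r Bl Br ll lr, ⟨?_, ?_⟩,
    (ll ×ˢ lr).map (SPAux.theta N₁l N₁r N₂l N₂r), Or.inl rfl, ?_, ?_⟩
  · show N₁l.typ ∪ N₁r.typ = N₂l.typ ∪ N₂r.typ
    rw [htypl, htypr]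
  · exact SPAux.choice_sim N₁l N₁r N₂l N₂r hm₁l hm₁r hn₁l hn₁r hBl.1 hBr.1
      hllB hlrB hll1 hll2 hlr1 hlr2
  · -- the second clause, via the swapped instance
    intro c L hL hc t₂ hpre
    have hmem' := SPAux.mem_choiceB_swap N₁l N₁r N₂l N₂r hL
    obtain ⟨t₁, hlbl, hq, cbar, hcb1, hcb2, hmem2⟩ :=
      SPAux.choice_sim N₂l N₂r N₁l N₁r hm₂l hm₂r hn₂l hn₂r
        (SPAux.swap_clause hBl.2) (SPAux.swap_clause hBr.2)
        (show (ll.map Prod.swap).map Prod.swap ∈ Bl by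
          rw [SPAux.map_swap_swap]; exact hllB)
        (show (lr.map Prod.swap).map Prod.swap ∈ Br by
          rw [SPAux.map_swap_swap]; exact hlrB)
        (show (ll.map Prod.swap).map Prod.fst = N₂l.M0 by
          rw [SPAux.map_swap_fst]; exact hll2)
        (show (ll.map Prod.swap).map Prod.snd = N₁l.M0 by
          rw [SPAux.map_swap_snd]; exact hll1)
        (show (lr.map Prod.swap).map Prod.fst = N₂r.M0 by
          rw [SPAux.map_swap_fst]; exact hlr2)
        (show (lr.map Prod.swap).map Prod.snd = N₁r.M0 by
          rw [SPAux.map_swap_snd]; exact hlr1)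
        (c.map Prod.swap) (L.map Prod.swap) hmem' (Multiset.map_le_map hc) t₂
        (show (c.map Prod.swap).map Prod.fst = _ by
          rw [SPAux.map_swap_fst]; exact hpre)
    refine ⟨t₁, hlbl, ?_, cbar.map Prod.swap, ?_, ?_, ?_⟩
    · show c.map Prod.fst = (choiceNet N₁l N₁r).pre t₁
      rw [← SPAux.map_swap_snd]; exact hq
    · show (cbar.map Prod.swap).map Prod.fst = (choiceNet N₁l N₁r).post t₁
      rw [SPAux.map_swap_fst]; exact hcb2
    · show (cbar.map Prod.swap).map Prod.snd = (choiceNet N₂l N₂r).post t₂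
      rw [SPAux.map_swap_snd]; exact hcb1
    · have h3 := SPAux.mem_choiceB_swap N₂l N₂r N₁l N₁r hmem2
      have e1 : {m : Linking N₁l N₂l |
          m.map Prod.swap ∈ {m : Linking N₂l N₁l | m.map Prod.swap ∈ Bl}} = Bl := by
        ext m; simp [Set.mem_setOf_eq, SPAux.map_swap_swap]
      have e2 : {m : Linking N₁r N₂r |
          m.map Prod.swap ∈ {m : Linking N₂r N₁r | m.map Prod.swap ∈ Br}} = Br := by
        ext m; simp [Set.mem_setOf_eq, SPAux.map_swap_swap]
      have e3 : (L.map Prod.swap - c.map Prod.swap + cbar).map Prod.swap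
          = L - c + cbar.map Prod.swap := by
        rw [Multiset.map_add, ← SPAux.map_sub_of_le hc, SPAux.map_swap_swap]
      rw [SPAux.map_swap_swap ll, SPAux.map_swap_swap lr, e1, e2, e3] at h3
      exact h3
  · show ((ll ×ˢ lr).map (SPAux.theta N₁l N₁r N₂l N₂r)).map Prod.fst
      = (N₁l.M0 ×ˢ N₁r.M0).map (fun q => Sum.inr (Sum.inr q))
    rw [SPAux.map_theta_fst, SPAux.map_sprod,
      show ll.map Prod.fst = N₁l.M0 from hll1, show lr.map Prod.fst = N₁r.M0 from hlr1]
  · show ((ll ×ˢ lr).map (SPAux.theta N₁l N₁r N₂l N₂r)).map Prod.snd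
      = (N₂l.M0 ×ˢ N₂r.M0).map (fun q => Sum.inr (Sum.inr q))
    rw [SPAux.map_theta_snd, SPAux.map_sprod,
      show ll.map Prod.snd = N₂l.M0 from hll2, show lr.map Prod.snd = N₂r.M0 from hlr2]
end

section
/- In a causal net with bounded parallelism, for every i ∈ ℕ the set of transitions of depth at most i is finite, where the depth of a transition u is one more than the maximum of the depths of all transitions t with (t,u) ∈ 𝔽⁺. -/
open scoped Classical

/-- The flow relation of a net, as a relation on `Plc ⊕ Tr`. -/
def PetriNet.flowRel {Act : Type} (N : PetriNet Act) :
    (N.Plc ⊕ N.Tr) → (N.Plc ⊕ N.Tr) → Prop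
  | Sum.inl s, Sum.inr t => s ∈ N.pre t
  | Sum.inr t, Sum.inl s => s ∈ N.post t
  | _, _ => False

/-- A causal net: a net (with bounded parallelism) in which every place has at most one
pre- and one posttransition (`|•s| ≤ 1 ≥ |s•|`), the initial marking consists of exactly
the places without pretransition (with multiplicity 1), the flow relation is acyclic,
and every transition has only finitely many causal predecessors. -/
def IsCausalNet {Act : Type} (C : PetriNet Act) : Prop :=
  C.BoundedParallelism ∧
  (∀ t : C.Tr, (C.pre t).Nodup) ∧
  (∀ t : C.Tr, (C.post t).Nodup) ∧
  (∀ (s : C.Plc) (t t' : C.Tr), s ∈ C.pre t → s ∈ C.pre t' → t = t') ∧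
  (∀ (s : C.Plc) (t t' : C.Tr), s ∈ C.post t → s ∈ C.post t' → t = t') ∧
  C.M0.Nodup ∧
  (∀ s : C.Plc, s ∈ C.M0 ↔ ∀ t : C.Tr, s ∉ C.post t) ∧
  (∀ x, ¬ Relation.TransGen C.flowRel x x) ∧
  (∀ u : C.Tr, {t : C.Tr | Relation.TransGen C.flowRel (Sum.inr t) (Sum.inr u)}.Finite)

/-- `depthLE C i u` states that the depth of the transition `u` is at most `i`, where
the depth of `u` is one more than the maximum of the depths of all transitions `t` with
`(t, u) ∈ 𝔽⁺`. -/
def depthLE {Act : Type} (C : PetriNet Act) : ℕ → C.Tr → Prop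
  | 0, _ => False
  | i + 1, u => ∀ t : C.Tr,
      Relation.TransGen C.flowRel (Sum.inr t) (Sum.inr u) → depthLE C i t

namespace CausalAux

variable {Act : Type} (C : PetriNet Act)

lemma depthLE_mono : ∀ i t, depthLE C i t → depthLE C (i + 1) t := by
  intro i
  induction i with
  | zero => intro t h; exact h.elim
  | succ i ih =>
      intro t h u hu
      exact ih u (h u hu)

lemma depthLE_pred : ∀ i t t', depthLE C i t →
    Relation.TransGen C.flowRel (Sum.inr t') (Sum.inr t) → depthLE C i t' := by
  intro i
  cases i with
  | zero => intro _ _ h; exact h.elim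
  | succ i => intro t t' h hlt; exact depthLE_mono C i t' (h t' hlt)

lemma exists_maximal {α : Type*} (r : α → α → Prop) (hirr : ∀ x, ¬ r x x)
    (htr : ∀ {a b c}, r a b → r b c → r a c) :
    ∀ (F : Finset α), F.Nonempty → ∃ t ∈ F, ∀ u ∈ F, ¬ r t u := by
  classical
  intro F
  induction F using Finset.strongInduction with
  | _ F ih =>
    intro hne
    obtain ⟨t0, ht0⟩ := hne
    by_cases h : ∃ u ∈ F, r t0 u
    · obtain ⟨u0, hu0F, hu0⟩ := h
      have hsub : F.filter (fun u => r t0 u) ⊂ F :=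
        Finset.filter_ssubset.mpr ⟨t0, ht0, hirr t0⟩
      obtain ⟨t, htm, hmax⟩ := ih _ hsub ⟨u0, Finset.mem_filter.mpr ⟨hu0F, hu0⟩⟩
      have htF := (Finset.mem_filter.mp htm).1
      have hrt0t := (Finset.mem_filter.mp htm).2
      exact ⟨t, htF, fun u huF hru =>
        hmax u (Finset.mem_filter.mpr ⟨huF, htr hrt0t hru⟩) hru⟩
    · exact ⟨t0, ht0, fun u huF hru => h ⟨u, huF, hru⟩⟩

lemma sum_indicator_eq {α : Type*} (F : Finset α) (p : α → Prop) [DecidablePred p]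
    (h : ∀ a ∈ F, ∀ b ∈ F, p a → p b → a = b) :
    (∑ t ∈ F, if p t then (1 : ℕ) else 0) = if ∃ t ∈ F, p t then 1 else 0 := by
  classical
  by_cases hex : ∃ t ∈ F, p t
  · obtain ⟨t0, ht0F, ht0⟩ := hex
    rw [if_pos ⟨t0, ht0F, ht0⟩, Finset.sum_eq_single t0]
    · exact if_pos ht0
    · intro b hb hne
      exact if_neg (fun hb' => hne (h b hb t0 ht0F hb' ht0))
    · intro hc; exact absurd ht0F hc
  · rw [if_neg hex]
    exact Finset.sum_eq_zero fun t ht => if_neg (fun hp => hex ⟨t, ht, hp⟩)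

/-- Count of a place in a sum of nodup, pairwise "uniquely owned" multisets. -/
lemma count_sum_eq (F : Finset C.Tr) (f : C.Tr → Multiset C.Plc)
    (hnd : ∀ t, (f t).Nodup) (huniq : ∀ s t t', s ∈ f t → s ∈ f t' → t = t')
    (s : C.Plc) :
    (∑ t ∈ F, f t).count s = if ∃ t ∈ F, s ∈ f t then 1 else 0 := by
  classical
  rw [Multiset.count_sum']
  have : ∀ t ∈ F, (f t).count s = if s ∈ f t then 1 else 0 := by
    intro t _
    by_cases hs : s ∈ f t
    · rw [if_pos hs, Multiset.count_eq_one_of_mem (hnd t) hs]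
    · rw [if_neg hs, Multiset.count_eq_zero_of_notMem hs]
  rw [Finset.sum_congr rfl this]
  exact sum_indicator_eq F (fun t => s ∈ f t)
    (fun a _ b _ ha hb => huniq s a b ha hb)

/-- Downward closure of a finite set of transitions under causality. -/
def DC (F : Finset C.Tr) : Prop :=
  ∀ t ∈ F, ∀ t', Relation.TransGen C.flowRel (Sum.inr t') (Sum.inr t) → t' ∈ F

/-- Every place in a preset either is initially marked or is produced by a causal
predecessor. -/
lemma producer (hC : IsCausalNet C) {s : C.Plc} {t : C.Tr} (hs : s ∈ C.pre t) :
    s ∈ C.M0 ∨ ∃ t', s ∈ C.post t' ∧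
      Relation.TransGen C.flowRel (Sum.inr t') (Sum.inr t) := by
  obtain ⟨-, -, -, -, -, -, hM0, -, -⟩ := id hC
  by_cases h : s ∈ C.M0
  · exact Or.inl h
  · right
    have : ¬ ∀ t' : C.Tr, s ∉ C.post t' := fun hall => h ((hM0 s).mpr hall)
    push_neg at this
    obtain ⟨t', ht'⟩ := this
    refine ⟨t', ht', ?_⟩
    have h1 : C.flowRel (Sum.inr t') (Sum.inl s) := ht'
    have h2 : C.flowRel (Sum.inl s) (Sum.inr t) := hs
    exact Relation.TransGen.head h1 (Relation.TransGen.single h2)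

/-- Exactness: for a downward closed `F`, the total preset is dominated by
`M₀` plus the total postset. -/
lemma sumPre_le (hC : IsCausalNet C) (F : Finset C.Tr) (hF : DC C F) :
    (∑ t ∈ F, C.pre t) ≤ C.M0 + ∑ t ∈ F, C.post t := by
  classical
  obtain ⟨-, hpreN, hpostN, hpreU, hpostU, hM0N, hM0, hacyc, -⟩ := id hC
  rw [Multiset.le_iff_count]
  intro s
  rw [Multiset.count_add, count_sum_eq C F C.pre hpreN hpreU,
      count_sum_eq C F C.post hpostN hpostU]
  by_cases hex : ∃ t ∈ F, s ∈ C.pre t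
  · rw [if_pos hex]
    obtain ⟨t, htF, hst⟩ := hex
    rcases producer C hC hst with hm | ⟨t', hst', hlt⟩
    · have := Multiset.count_eq_one_of_mem hM0N hm
      omega
    · have ht'F : t' ∈ F := hF t htF t' hlt
      rw [if_pos ⟨t', ht'F, hst'⟩]
      omega
  · rw [if_neg hex]
    exact Nat.zero_le _

/-- The marking obtained after firing a downward closed finite set of transitions. -/
noncomputable def MF (F : Finset C.Tr) : Multiset C.Plc :=
  C.M0 + ∑ t ∈ F, C.post t - ∑ t ∈ F, C.pre t

/-- If `F` is downward closed and `t ∈ F` is causally maximal in `F`, then `t` is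
enabled at the marking after firing `F.erase t`. -/
lemma pre_le_MF_erase (hC : IsCausalNet C) (F : Finset C.Tr) (hF : DC C F) {t : C.Tr} (htF : t ∈ F) :
    C.pre t ≤ MF C (F.erase t) := by
  classical
  obtain ⟨-, hpreN, hpostN, hpreU, hpostU, hM0N, hM0, hacyc, -⟩ := id hC
  rw [Multiset.le_iff_count]
  intro s
  unfold MF
  rw [Multiset.count_sub, Multiset.count_add,
      count_sum_eq C _ C.pre hpreN hpreU, count_sum_eq C _ C.post hpostN hpostU]
  by_cases hs : s ∈ C.pre t
  · rw [Multiset.count_eq_one_of_mem (hpreN t) hs]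
    have hpre0 : ¬ ∃ u ∈ F.erase t, s ∈ C.pre u := by
      rintro ⟨u, huF, hsu⟩
      have : u = t := hpreU s u t hsu hs
      exact (Finset.ne_of_mem_erase huF) this
    rw [if_neg hpre0]
    rcases producer C hC hs with hm | ⟨t', hst', hlt⟩
    · have := Multiset.count_eq_one_of_mem hM0N hm
      omega
    · have ht'F : t' ∈ F := hF t htF t' hlt
      have hne : t' ≠ t := by
        rintro rfl
        exact hacyc _ hlt
      rw [if_pos ⟨t', Finset.mem_erase.mpr ⟨hne, ht'F⟩, hst'⟩]
      omega
  · rw [Multiset.count_eq_zero_of_notMem hs]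
    exact Nat.zero_le _

lemma DC_erase (F : Finset C.Tr) (hF : DC C F) {t : C.Tr} (htF : t ∈ F)
    (hmax : ∀ u ∈ F, ¬ Relation.TransGen C.flowRel (Sum.inr t) (Sum.inr u)) :
    DC C (F.erase t) := by
  intro u huF t' hlt
  have huF' : u ∈ F := Finset.mem_of_mem_erase huF
  have ht' : t' ∈ F := hF u huF' t' hlt
  refine Finset.mem_erase.mpr ⟨?_, ht'⟩
  rintro rfl
  exact hmax u huF' hlt

/-- Firing a maximal transition of `F` from the marking of `F.erase t` reaches the
marking of `F`. -/
lemma MF_step (hC : IsCausalNet C) (F : Finset C.Tr) (hF : DC C F) {t : C.Tr} (htF : t ∈ F)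
    (hmax : ∀ u ∈ F, ¬ Relation.TransGen C.flowRel (Sum.inr t) (Sum.inr u)) :
    MF C F = MF C (F.erase t) - C.pre t + C.post t := by
  classical
  have hDCe := DC_erase C F hF htF hmax
  have hle := Multiset.le_iff_count.mp (sumPre_le C hC (F.erase t) hDCe)
  have hle2 := Multiset.le_iff_count.mp (pre_le_MF_erase C hC F hF htF)
  obtain ⟨-, hpreN, hpostN, hpreU, hpostU, hM0N, hM0, hacyc, -⟩ := id hC
  ext s
  have h1 := hle s
  have h2 := hle2 s
  unfold MF at *
  rw [Multiset.count_sub, Multiset.count_add] at h2 ⊢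
  rw [Multiset.count_add] at h1
  rw [Multiset.count_add, Multiset.count_sub, Multiset.count_sub, Multiset.count_add,
      ← Finset.sum_erase_add F C.post htF, ← Finset.sum_erase_add F C.pre htF,
      Multiset.count_add, Multiset.count_add]
  omega

/-- The marking `MF C F` of a downward closed finite set is reachable. -/
lemma MF_reachable (hC : IsCausalNet C) :
    ∀ (F : Finset C.Tr), DC C F → C.Reachable (MF C F) := by
  classical
  intro F
  induction F using Finset.strongInduction with
  | _ F ih =>
    intro hF
    rcases F.eq_empty_or_nonempty with rfl | hne
    · have : MF C (∅ : Finset C.Tr) = C.M0 := by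
        simp [MF]
      rw [this]
      exact PetriNet.Reachable.init
    · have hacyc := hC.2.2.2.2.2.2.2.1
      obtain ⟨t, htF, hmax⟩ :=
        exists_maximal (fun a b : C.Tr =>
            Relation.TransGen C.flowRel (Sum.inr a) (Sum.inr b))
          (fun x h => hacyc _ h) (fun hab hbc => hab.trans hbc) F hne
      have hDCe := DC_erase C F hF htF hmax
      have hreach := ih (F.erase t) (Finset.erase_ssubset htF) hDCe
      have hfire : C.fires (MF C (F.erase t)) t (MF C F) :=
        ⟨pre_le_MF_erase C hC F hF htF, MF_step C hC F hF htF hmax⟩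
      exact PetriNet.Reachable.step hreach hfire

end CausalAux

open CausalAux in
/-- In a causal net (a net, hence with bounded parallelism), for every `i` the set of
transitions of depth at most `i` is finite. -/
theorem causalNet_depth_finite {Act : Type} (C : PetriNet Act) (hC : IsCausalNet C)
    (i : ℕ) : {t : C.Tr | depthLE C i t}.Finite := by
  classical
  induction i with
  | zero =>
      have : {t : C.Tr | depthLE C 0 t} = ∅ := by
        ext t; simp [depthLE]
      rw [this]; exact Set.finite_empty
  | succ i ih =>
      by_contra hinf
      rw [← Set.not_infinite, not_not] at hinf
      -- the finite set of transitions of depth at most `i`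
      set F : Finset C.Tr := ih.toFinset with hFdef
      have hmemF : ∀ t, t ∈ F ↔ depthLE C i t := by
        intro t; simp [hFdef, Set.Finite.mem_toFinset]
      have hFDC : DC C F := by
        intro t htF t' hlt
        rw [hmemF] at htF ⊢
        exact depthLE_pred C i t t' htF hlt
      -- the set of transitions of depth exactly `i+1`
      set S : Set C.Tr := {t | depthLE C (i + 1) t} \ {t | depthLE C i t} with hSdef
      have hSinf : S.Infinite := hinf.diff ih
      set U : C.Tr → ℕ := fun t => if t ∈ S then 1 else 0 with hUdef
      have hsupp : Function.support U = S := by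
        ext t
        simp [hUdef, Function.mem_support]
      apply hC.1
      refine ⟨MF C F, U, MF_reachable C hC F hFDC, by rw [hsupp]; exact hSinf, ?_⟩
      intro G
      obtain ⟨-, hpreN, hpostN, hpreU, hpostU, hM0N, hM0, hacyc, -⟩ := id hC
      rw [Multiset.le_iff_count]
      intro s
      rw [Multiset.count_sum']
      have hterm : ∀ t ∈ G, (U t • C.pre t).count s =
          if t ∈ S ∧ s ∈ C.pre t then 1 else 0 := by
        intro t _
        simp only [Multiset.count_nsmul, hUdef]
        by_cases htS : t ∈ S
        · rw [if_pos htS, one_mul]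
          by_cases hst : s ∈ C.pre t
          · rw [if_pos ⟨htS, hst⟩, Multiset.count_eq_one_of_mem (hpreN t) hst]
          · rw [if_neg (fun h : t ∈ S ∧ s ∈ C.pre t => hst h.2),
              Multiset.count_eq_zero_of_notMem hst]
        · rw [if_neg htS, zero_mul,
            if_neg (fun h : t ∈ S ∧ s ∈ C.pre t => htS h.1)]
      rw [Finset.sum_congr rfl hterm,
        sum_indicator_eq G (fun t => t ∈ S ∧ s ∈ C.pre t)
          (fun a _ b _ ha hb => hpreU s a b ha.2 hb.2)]
      by_cases hex : ∃ t ∈ G, t ∈ S ∧ s ∈ C.pre t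
      · rw [if_pos hex]
        obtain ⟨t, _, ⟨htd, htnd⟩, hst⟩ := hex
        unfold MF
        rw [Multiset.count_sub, Multiset.count_add,
            count_sum_eq C F C.pre hpreN hpreU, count_sum_eq C F C.post hpostN hpostU]
        have hpre0 : ¬ ∃ u ∈ F, s ∈ C.pre u := by
          rintro ⟨u, huF, hsu⟩
          have : u = t := hpreU s u t hsu hst
          subst this
          exact htnd ((hmemF u).mp huF)
        rw [if_neg hpre0]
        rcases producer C hC hst with hm | ⟨t', hst', hlt⟩
        · have := Multiset.count_eq_one_of_mem hM0N hm
          omega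
        · have ht'F : t' ∈ F := by
            rw [hmemF]
            exact htd t' hlt
          rw [if_pos ⟨t', ht'F, hst'⟩]
          omega
      · rw [if_neg hex]
        exact Nat.zero_le _
end
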